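/- arXiv:2010.11047 — 5 statements merged into one kernel-verified Lean document; each statement's English description precedes it below -/
import Mathlib

section
/- Let (p_t)_{t∈[0,1]} be a continuous family of nonzero real Laurent polynomials in z, none of which has a root on the unit circle. Define A_t := (s − 1 − d) + 2p + r_− − r_+, where d is the top degree of p_t, s ∈ {±1} is the sign of its leading coefficient, r_+ is the number of real roots z > 1 counted with multiplicity, r_− the number of real roots z < −1 counted with multiplicity, and p the number of pairs of complex-conjugate (non-real) roots of modulus > 1 counted with multiplicity. Then A_t mod 4 is independent of t. -/
open scoped Classical
open Polynomial Metric Complex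

lemma aux_prod_pos_iff (S : Multiset ℝ) (hS : ∀ x ∈ S, x ≠ 0) :
    (0 < S.prod ↔ Even (S.filter (fun x => x < 0)).card) := by
  induction S using Multiset.induction_on with
  | empty => simp
  | cons a s ih =>
    have ha : a ≠ 0 := hS a (Multiset.mem_cons_self a s)
    have hs := ih (fun x hx => hS x (Multiset.mem_cons_of_mem hx))
    have hsne : s.prod ≠ 0 := by
      intro h
      rcases Multiset.prod_eq_zero_iff.mp h with hx
      exact hS 0 (Multiset.mem_cons_of_mem hx) rfl
    rw [Multiset.prod_cons, Multiset.filter_cons]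
    rcases ha.lt_or_gt with h | h
    · simp only [if_pos h]
      rw [Multiset.card_add, Multiset.card_singleton]
      constructor
      · intro hpos
        have : s.prod < 0 := by
          by_contra hc
          push_neg at hc
          nlinarith [hc.lt_of_ne' hsne]
        have : ¬ (0 < s.prod) := by linarith
        rw [hs] at this
        rw [add_comm, Nat.even_add_one]
        simpa using this
      · intro hev
        rw [add_comm, Nat.even_add_one] at hev
        have : ¬ (0 < s.prod) := by rw [hs]; simpa using hev
        have hneg : s.prod < 0 := lt_of_le_of_ne (not_lt.mp this) hsne
        nlinarith
    · have : ¬ (a < 0) := by linarith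
      simp only [if_neg this, zero_add]
      constructor
      · intro hpos
        rw [← hs]
        nlinarith
      · intro hev
        have := hs.mpr hev
        nlinarith

lemma aux_circleIntegral_add {f g : ℂ → ℂ} {c : ℂ} {R : ℝ} (hf : CircleIntegrable f c R)
    (hg : CircleIntegrable g c R) :
    (∮ z in C(c, R), (f z + g z)) = (∮ z in C(c, R), f z) + ∮ z in C(c, R), g z := by
  simp only [circleIntegral, smul_add, intervalIntegral.integral_add hf.out hg.out]

lemma aux_integral_inv_outside {r : ℂ} (hr : 1 < ‖r‖) :
    (∮ z in C((0:ℂ), 1), (z - r)⁻¹) = 0 := by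
  apply circleIntegral_eq_zero_of_differentiable_on_off_countable zero_le_one
    Set.countable_empty
  · apply ContinuousOn.inv₀
    · exact (continuous_id.sub continuous_const).continuousOn
    · intro z hz
      rw [sub_ne_zero]
      intro h
      rw [mem_closedBall, dist_zero_right] at hz
      rw [h] at hz
      exact absurd hz (by simpa using not_le.mpr hr)
  · intro z hz
    apply DifferentiableAt.inv
    · exact differentiableAt_id.sub (differentiableAt_const _)
    · rw [sub_ne_zero]
      intro h
      rw [Set.mem_diff, mem_ball, dist_zero_right] at hz
      rw [h] at hz
      exact absurd hz.1 (by simp; linarith)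

lemma aux_argument_principle :
    ∀ (n : ℕ) (Q : ℂ[X]), Q.natDegree = n → (∀ z : ℂ, ‖z‖ = 1 → Q.eval z ≠ 0) →
    (∮ z in C((0:ℂ), 1), (Q.derivative.eval z / Q.eval z))
      = (2 * Real.pi * Complex.I) * ((Q.roots.filter (fun z => ‖z‖ < 1)).card : ℂ) := by
  intro n
  induction n using Nat.strong_induction_on with
  | _ n ih =>
    intro Q hn hQ
    have hQ0 : Q ≠ 0 := fun h => hQ 1 (by simp) (by simp [h])
    rcases Nat.eq_zero_or_pos n with h0 | hpos
    · -- constant polynomial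
      subst h0
      obtain ⟨a, rfl⟩ := Polynomial.natDegree_eq_zero.mp hn
      have : (Polynomial.C a).roots = 0 := Polynomial.roots_C a
      rw [this]
      simp [circleIntegral]
    · -- Q has a root
      have hdeg : 0 < Q.degree := by
        rw [Polynomial.degree_eq_natDegree hQ0, hn]
        exact_mod_cast hpos
      obtain ⟨r, hr⟩ := Complex.exists_root hdeg
      obtain ⟨Q₁, hfac⟩ := (Polynomial.dvd_iff_isRoot.mpr hr)
      have hQ₁0 : Q₁ ≠ 0 := by
        rintro rfl; rw [mul_zero] at hfac; exact hQ0 hfac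
      have hXr : (Polynomial.X - Polynomial.C r) ≠ 0 := Polynomial.X_sub_C_ne_zero r
      have hdeg₁ : Q₁.natDegree = n - 1 := by
        have := Polynomial.natDegree_mul hXr hQ₁0
        rw [← hfac, hn, Polynomial.natDegree_X_sub_C] at this
        omega
      have habs_r : ‖r‖ ≠ 1 := by
        intro h
        exact hQ r h hr
      have hQ₁ : ∀ z : ℂ, ‖z‖ = 1 → Q₁.eval z ≠ 0 := by
        intro z hz h
        apply hQ z hz
        rw [hfac, Polynomial.eval_mul, h, mul_zero]
      have hroots : Q.roots = r ::ₘ Q₁.roots := by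
        rw [hfac, Polynomial.roots_mul (hfac ▸ hQ0), Polynomial.roots_X_sub_C]
        rfl
      have hzr : ∀ z : ℂ, ‖z‖ = 1 → z - r ≠ 0 := by
        intro z hz h
        rw [sub_eq_zero] at h
        exact habs_r (h ▸ hz)
      -- integrand splits
      have hint1 : CircleIntegrable (fun z => (z - r)⁻¹) 0 1 := by
        apply ContinuousOn.circleIntegrable zero_le_one
        apply ContinuousOn.inv₀ (continuous_id.sub continuous_const).continuousOn
        intro z hz
        exact hzr z (by rwa [mem_sphere_zero_iff_norm] at hz)
      have hint2 : CircleIntegrable (fun z => Q₁.derivative.eval z / Q₁.eval z) 0 1 := by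
        apply ContinuousOn.circleIntegrable zero_le_one
        apply ContinuousOn.div (Polynomial.continuous _).continuousOn
          (Polynomial.continuous _).continuousOn
        intro z hz
        exact hQ₁ z (by rwa [mem_sphere_zero_iff_norm] at hz)
      have heq : (∮ z in C((0:ℂ), 1), (Q.derivative.eval z / Q.eval z))
          = ∮ z in C((0:ℂ), 1), ((z - r)⁻¹ + Q₁.derivative.eval z / Q₁.eval z) := by
        apply circleIntegral.integral_congr zero_le_one
        intro z hz
        rw [mem_sphere_zero_iff_norm] at hz
        have h1 : z - r ≠ 0 := hzr z hz
        have h2 : Q₁.eval z ≠ 0 := hQ₁ z hz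
        rw [hfac]
        simp only [Polynomial.derivative_mul, Polynomial.derivative_X_sub_C, one_mul,
          Polynomial.eval_mul, Polynomial.eval_add, Polynomial.eval_sub, Polynomial.eval_X,
          Polynomial.eval_C]
        field_simp
      rw [heq, aux_circleIntegral_add hint1 hint2,
        ih (n-1) (by omega) Q₁ hdeg₁ hQ₁, hroots]
      rw [Multiset.filter_cons]
      rcases habs_r.lt_or_gt with hlt | hgt
      · rw [if_pos hlt, circleIntegral.integral_sub_inv_of_mem_ball (by simpa using hlt)]
        rw [Multiset.card_add, Multiset.card_singleton]
        push_cast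
        ring
      · rw [if_neg (by simpa using not_lt.mpr hgt.le), aux_integral_inv_outside hgt, zero_add]
        simp

lemma aux_count_const (Q : ℝ → ℂ[X])
    (hev : Continuous fun p : ℝ × ℂ => (Q p.1).eval p.2)
    (hdev : Continuous fun p : ℝ × ℂ => (Q p.1).derivative.eval p.2)
    (hcirc : ∀ t, ∀ z : ℂ, ‖z‖ = 1 → (Q t).eval z ≠ 0) (t₀ t₁ : ℝ) :
    ((Q t₀).roots.filter (fun z => ‖z‖ < 1)).card
      = ((Q t₁).roots.filter (fun z => ‖z‖ < 1)).card := by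
  set cnt : ℝ → ℕ := fun t => ((Q t).roots.filter (fun z => ‖z‖ < 1)).card with hcnt
  set F : ℝ → ℂ := fun t =>
    ∮ z in C((0:ℂ), 1), ((Q t).derivative.eval z / (Q t).eval z) with hF
  have hFval : ∀ t, F t = (2 * Real.pi * Complex.I) * (cnt t : ℂ) := fun t =>
    aux_argument_principle (Q t).natDegree (Q t) rfl (hcirc t)
  have habs : ∀ θ : ℝ, ‖circleMap 0 1 θ‖ = 1 := by
    intro θ; rw [norm_circleMap_zero]; norm_num
  have hFcont : Continuous F := by
    have : F = fun t => ∫ θ in (0:ℝ)..(2*Real.pi),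
        (fun t θ => deriv (circleMap 0 1) θ •
          ((Q t).derivative.eval (circleMap 0 1 θ) / (Q t).eval (circleMap 0 1 θ))) t θ := rfl
    rw [this]
    apply intervalIntegral.continuous_parametric_intervalIntegral_of_continuous'
    show Continuous ((fun p : ℝ × ℝ => deriv (circleMap 0 1) p.2) • (fun p : ℝ × ℝ =>
      (Q p.1).derivative.eval (circleMap 0 1 p.2) / (Q p.1).eval (circleMap 0 1 p.2)))
    apply Continuous.smul
    · have : (fun p : ℝ × ℝ => deriv (circleMap 0 1) p.2)
          = fun p : ℝ × ℝ => circleMap 0 1 p.2 * Complex.I := by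
        funext p; rw [deriv_circleMap]
      rw [this]
      exact (((continuous_circleMap 0 1).comp continuous_snd).mul continuous_const)
    · apply Continuous.div
      · exact hdev.comp (continuous_fst.prodMk
          ((continuous_circleMap 0 1).comp continuous_snd))
      · exact hev.comp (continuous_fst.prodMk
          ((continuous_circleMap 0 1).comp continuous_snd))
      · intro p
        exact hcirc p.1 _ (habs p.2)
  -- real-valued continuous representative
  have h2pi : (2 * Real.pi * Complex.I) ≠ 0 := by
    simp [Real.pi_ne_zero, Complex.I_ne_zero]
  have hcntc : ∀ t, (cnt t : ℝ) = (F t / (2 * Real.pi * Complex.I)).re := by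
    intro t
    rw [hFval t, mul_comm, mul_div_assoc, div_self h2pi, mul_one]
    simp
  have hg : Continuous fun t => (cnt t : ℝ) := by
    have : (fun t => (cnt t : ℝ)) = fun t => (F t / (2 * Real.pi * Complex.I)).re := by
      funext t; exact hcntc t
    rw [this]
    exact Complex.continuous_re.comp (hFcont.div_const _)
  have key : ∀ a b : ℝ, cnt a < cnt b → False := by
    intro a b hab
    have hsub : Set.uIcc ((cnt a : ℝ)) ((cnt b : ℝ)) ⊆ (fun t => (cnt t : ℝ)) '' Set.uIcc a b :=
      intermediate_value_uIcc hg.continuousOn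
    have hv : ((cnt a : ℝ) + 1/2) ∈ Set.uIcc ((cnt a : ℝ)) ((cnt b : ℝ)) := by
      rw [Set.mem_uIcc]
      left
      constructor
      · linarith
      · have : (cnt a : ℝ) + 1 ≤ (cnt b : ℝ) := by exact_mod_cast hab
        linarith
    obtain ⟨s, _, hs⟩ := hsub hv
    have : (2 * cnt s : ℝ) = (2 * cnt a + 1 : ℕ) := by push_cast; linarith
    have : 2 * cnt s = 2 * cnt a + 1 := by exact_mod_cast this
    omega
  rcases lt_trichotomy (cnt t₀) (cnt t₁) with h | h | h
  · exact absurd (key t₀ t₁ h) not_false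
  · exact h
  · exact absurd (key t₁ t₀ h) not_false

lemma aux_deg (N : ℕ) (b : ℤ → ℝ) (d : ℤ)
    (hd : b d ≠ 0) (hdt : ∀ k, d < k → b k = 0) (hdlb : -(N:ℤ) ≤ d) (hdub : d ≤ (N:ℤ))
    (Q : ℂ[X])
    (hQdef : Q = ∑ k ∈ Finset.Icc (-(N:ℤ)) (N:ℤ),
      Polynomial.C ((b k : ℂ)) * Polynomial.X ^ (k + N).toNat) :
    Q.natDegree = (d + (N:ℤ)).toNat ∧ Q.leadingCoeff = (b d : ℂ) ∧ Q ≠ 0 := by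
  have hcoeff : ∀ m : ℕ, Q.coeff m =
      if ((m:ℤ) - N) ∈ Finset.Icc (-(N:ℤ)) (N:ℤ) then ((b ((m:ℤ) - N) : ℝ) : ℂ) else 0 := by
    intro m
    rw [hQdef, Polynomial.finset_sum_coeff]
    have : ∀ k ∈ Finset.Icc (-(N:ℤ)) (N:ℤ),
        (Polynomial.C ((b k : ℂ)) * Polynomial.X ^ (k + N).toNat).coeff m
          = if k = (m:ℤ) - N then ((b k : ℝ) : ℂ) else 0 := by
      intro k hk
      rw [Polynomial.coeff_C_mul, Polynomial.coeff_X_pow]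
      rw [Finset.mem_Icc] at hk
      have hk0 : (0:ℤ) ≤ k + N := by omega
      have heq : (m = (k + N).toNat) ↔ (k = (m:ℤ) - N) := by
        constructor
        · intro h
          have : (m : ℤ) = ((k + N).toNat : ℤ) := by exact_mod_cast h
          rw [Int.toNat_of_nonneg hk0] at this
          omega
        · intro h
          have : (m:ℤ) = k + N := by omega
          have h2 : ((k + N).toNat : ℤ) = k + N := Int.toNat_of_nonneg hk0
          exact_mod_cast this.trans h2.symm
      rw [if_congr heq rfl rfl, mul_ite, mul_one, mul_zero]
    rw [Finset.sum_congr rfl this, Finset.sum_ite_eq' _ ((m:ℤ) - N) (fun k => ((b k : ℝ) : ℂ))]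
  have htop : ((d + (N:ℤ)).toNat : ℤ) = d + (N:ℤ) := Int.toNat_of_nonneg (by omega)
  have hcoeff_top : Q.coeff (d + (N:ℤ)).toNat = (b d : ℂ) := by
    rw [hcoeff]
    have h1 : (((d + (N:ℤ)).toNat : ℤ) - N) = d := by omega
    rw [h1, if_pos (Finset.mem_Icc.mpr ⟨hdlb, hdub⟩)]
  have hcoeff_gt : ∀ m : ℕ, (d + (N:ℤ)).toNat < m → Q.coeff m = 0 := by
    intro m hm
    rw [hcoeff]
    split_ifs with h
    · have : d < (m:ℤ) - N := by omega
      rw [hdt _ this]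
      simp
    · rfl
  have hQne : Q ≠ 0 := by
    intro h
    apply hd
    have := hcoeff_top
    rw [h, Polynomial.coeff_zero] at this
    exact_mod_cast this.symm
  have hdeg : Q.natDegree = (d + (N:ℤ)).toNat := by
    apply le_antisymm
    · exact Polynomial.natDegree_le_iff_coeff_eq_zero.mpr hcoeff_gt
    · apply Polynomial.le_natDegree_of_ne_zero
      rw [hcoeff_top]
      exact_mod_cast hd
  refine ⟨hdeg, ?_, hQne⟩
  rw [Polynomial.leadingCoeff, hdeg, hcoeff_top]

lemma aux_partition (s : Multiset ℂ) :
    s = s.filter (fun z => z.im = 0)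
      + (s.filter (fun z => 0 < z.im) + s.filter (fun z => z.im < 0)) := by
  have h2 := Multiset.filter_add_not (fun z => 0 < z.im) (s.filter (fun z => ¬ z.im = 0))
  rw [Multiset.filter_filter, Multiset.filter_filter] at h2
  have e1 : s.filter (fun a => 0 < a.im ∧ ¬ a.im = 0) = s.filter (fun z => 0 < z.im) :=
    Multiset.filter_congr (fun x _ =>
      ⟨fun h => h.1, fun h => ⟨h, fun h0 => by rw [h0] at h; exact lt_irrefl 0 h⟩⟩)
  have e2 : s.filter (fun a => ¬ 0 < a.im ∧ ¬ a.im = 0) = s.filter (fun z => z.im < 0) :=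
    Multiset.filter_congr (fun x _ => by
      constructor
      · intro h
        rcases lt_trichotomy x.im 0 with h'|h'|h'
        · exact h'
        · exact absurd h' h.2
        · exact absurd h' h.1
      · intro h
        exact ⟨fun h' => absurd h (not_lt.mpr h'.le), fun h' => by rw [h'] at h; exact lt_irrefl 0 h⟩)
  rw [e1, e2] at h2
  rw [h2]
  exact (Multiset.filter_add_not (fun z => z.im = 0) s).symm

lemma aux_key (N : ℕ) (b : ℤ → ℝ) (d : ℤ)
    (hd : b d ≠ 0) (hdt : ∀ k, d < k → b k = 0) (hdlb : -(N:ℤ) ≤ d) (hdub : d ≤ (N:ℤ))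
    (Q : ℂ[X])
    (hQdef : Q = ∑ k ∈ Finset.Icc (-(N:ℤ)) (N:ℤ),
      Polynomial.C ((b k : ℂ)) * Polynomial.X ^ (k + N).toNat)
    (hnat : Q.natDegree = (d + (N:ℤ)).toNat)
    (hlead : Q.leadingCoeff = (b d : ℂ))
    (hQne : Q ≠ 0)
    (hcirc : ∀ z : ℂ, ‖z‖ = 1 → Q.eval z ≠ 0) :
    ((Multiset.card Q.roots : ℤ) = d + N)
    ∧ (((Q.roots.filter (fun z => ‖z‖ < 1)).card : ℤ)
        + ((Q.roots.filter (fun z => z.im = 0 ∧ 1 < z.re)).card : ℤ)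
        + ((Q.roots.filter (fun z => z.im = 0 ∧ z.re < -1)).card : ℤ)
        + 2 * ((Q.roots.filter (fun z => 0 < z.im ∧ 1 < ‖z‖)).card : ℤ)
        = (Multiset.card Q.roots : ℤ))
    ∧ (Even ((Q.roots.filter (fun z => z.im = 0 ∧ 1 < z.re)).card)
        ↔ ((0 < b d) ↔ 0 < ∑ k ∈ Finset.Icc (-(N:ℤ)) (N:ℤ), b k)) := by
  have hsplits : Q.Splits := IsAlgClosed.splits Q
  have hroot_mem : ∀ r ∈ Q.roots, Q.IsRoot r := fun r hr => (Polynomial.mem_roots hQne).mp hr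
  have hroot_ne : ∀ r ∈ Q.roots, ‖r‖ ≠ 1 := by
    intro r hr habs
    exact hcirc r habs (hroot_mem r hr)
  have hcard : (Multiset.card Q.roots : ℤ) = d + N := by
    rw [Polynomial.splits_iff_card_roots.mp hsplits, hnat]
    exact Int.toNat_of_nonneg (by omega)
  have hconjQ : Q.map (starRingEnd ℂ) = Q := by
    rw [hQdef, Polynomial.map_sum]
    congr 1
    funext k
    rw [Polynomial.map_mul, Polynomial.map_C, Polynomial.map_pow, Polynomial.map_X,
      Complex.conj_ofReal]
  have hconj : Q.roots.map (starRingEnd ℂ) = Q.roots := by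
    conv_rhs => rw [← hconjQ]
    rw [hsplits.roots_map]
  have hconj_filter : ∀ p : ℂ → Prop,
      Q.roots.filter p = (Q.roots.filter (fun z => p ((starRingEnd ℂ) z))).map (starRingEnd ℂ) := by
    intro p
    conv_lhs => rw [← hconj]
    rw [Multiset.filter_map]
    rfl
  -- ### Part 2 : the counting identity
  set I₁ := Q.roots.filter (fun z => ‖z‖ < 1) with hI₁
  set T := Q.roots.filter (fun z => 1 < ‖z‖) with hT
  have hsplit1 : I₁.card + T.card = Multiset.card Q.roots := by
    have := Multiset.filter_add_not (fun z => ‖z‖ < 1) Q.roots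
    have e1 : Q.roots.filter (fun z => ¬ ‖z‖ < 1) = T := by
      apply Multiset.filter_congr
      intro x hx
      constructor
      · intro h
        exact lt_of_le_of_ne (not_lt.mp h) (Ne.symm (hroot_ne x hx))
      · intro h
        exact not_lt.mpr h.le
    rw [e1] at this
    rw [← Multiset.card_add, this]
  have hTpart := aux_partition T
  have hT0 : T.filter (fun z => z.im = 0)
      = Q.roots.filter (fun z => z.im = 0 ∧ 1 < ‖z‖) := by
    rw [hT, Multiset.filter_filter]
  have hTp : T.filter (fun z => 0 < z.im)
      = Q.roots.filter (fun z => 0 < z.im ∧ 1 < ‖z‖) := by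
    rw [hT, Multiset.filter_filter]
  have hTm : T.filter (fun z => z.im < 0)
      = Q.roots.filter (fun z => z.im < 0 ∧ 1 < ‖z‖) := by
    rw [hT, Multiset.filter_filter]
  have habs_im0 : ∀ z : ℂ, z.im = 0 → ‖z‖ = |z.re| := by
    intro z hz
    have : z = (z.re : ℂ) := Complex.ext rfl (by simp [hz])
    conv_lhs => rw [this]
    rw [Complex.norm_real, Real.norm_eq_abs]
  -- split T0 into r₊ and r₋ parts
  have hT0split : (T.filter (fun z => z.im = 0)).card
      = (Q.roots.filter (fun z => z.im = 0 ∧ 1 < z.re)).card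
        + (Q.roots.filter (fun z => z.im = 0 ∧ z.re < -1)).card := by
    rw [hT0]
    have h1 := Multiset.filter_add_filter (fun z : ℂ => z.im = 0 ∧ 1 < z.re)
      (fun z : ℂ => z.im = 0 ∧ z.re < -1) Q.roots
    have h2 : Q.roots.filter (fun z => (z.im = 0 ∧ 1 < z.re) ∧ (z.im = 0 ∧ z.re < -1)) = 0 := by
      rw [Multiset.filter_eq_nil]
      rintro z _ ⟨⟨_, h1'⟩, ⟨_, h2'⟩⟩
      linarith
    have h3 : Q.roots.filter (fun z => (z.im = 0 ∧ 1 < z.re) ∨ (z.im = 0 ∧ z.re < -1))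
        = Q.roots.filter (fun z => z.im = 0 ∧ 1 < ‖z‖) := by
      apply Multiset.filter_congr
      intro z hz
      constructor
      · rintro (⟨h0, h1'⟩ | ⟨h0, h1'⟩)
        · exact ⟨h0, by rw [habs_im0 z h0]; rw [abs_of_pos (by linarith)]; exact h1'⟩
        · refine ⟨h0, ?_⟩
          rw [habs_im0 z h0, abs_of_neg (by linarith)]
          linarith
      · rintro ⟨h0, h1'⟩
        rw [habs_im0 z h0] at h1'
        rcases lt_or_ge 0 z.re with hp | hp
        · left; exact ⟨h0, by rwa [abs_of_pos hp] at h1'⟩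
        · right
          refine ⟨h0, ?_⟩
          rw [abs_of_nonpos hp] at h1'
          linarith
    rw [h2, add_zero, h3] at h1
    rw [← h1, Multiset.card_add]
  -- pairing for T
  have hTmTp : (T.filter (fun z => z.im < 0)).card = (T.filter (fun z => 0 < z.im)).card := by
    rw [hTm, hTp]
    have h1 : Q.roots.filter (fun z => z.im < 0 ∧ 1 < ‖z‖)
        = (Q.roots.filter (fun z => 0 < z.im ∧ 1 < ‖z‖)).map (starRingEnd ℂ) := by
      conv_lhs => rw [← hconj]
      rw [Multiset.filter_map]
      congr 1
      apply Multiset.filter_congr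
      intro z _
      simp only [Function.comp, Complex.conj_im, Complex.norm_conj]
      constructor
      · rintro ⟨h1, h2⟩; exact ⟨by linarith, h2⟩
      · rintro ⟨h1, h2⟩; exact ⟨by linarith, h2⟩
    rw [h1, Multiset.card_map]
  have hcount : ((Q.roots.filter (fun z => ‖z‖ < 1)).card : ℤ)
      + ((Q.roots.filter (fun z => z.im = 0 ∧ 1 < z.re)).card : ℤ)
      + ((Q.roots.filter (fun z => z.im = 0 ∧ z.re < -1)).card : ℤ)
      + 2 * ((Q.roots.filter (fun z => 0 < z.im ∧ 1 < ‖z‖)).card : ℤ)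
      = (Multiset.card Q.roots : ℤ) := by
    have hTcard : T.card = (T.filter (fun z => z.im = 0)).card
        + ((T.filter (fun z => 0 < z.im)).card + (T.filter (fun z => z.im < 0)).card) := by
      conv_lhs => rw [hTpart]
      rw [Multiset.card_add, Multiset.card_add]
    rw [hT0split, hTmTp, hTp] at hTcard
    have h1 : I₁.card + T.card = Multiset.card Q.roots := hsplit1
    rw [hTcard] at h1
    rw [hI₁] at h1
    push_cast [← h1]
    ring
  -- ### Part 3 : the sign identity
  set P0 := Q.roots.filter (fun z => z.im = 0) with hP0
  set Pp := Q.roots.filter (fun z => 0 < z.im) with hPp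
  set Pm := Q.roots.filter (fun z => z.im < 0) with hPm
  have hPmPp : Pm = Pp.map (starRingEnd ℂ) := by
    rw [hPm, hPp]
    conv_lhs => rw [← hconj]
    rw [Multiset.filter_map]
    congr 1
    apply Multiset.filter_congr
    intro z _
    simp only [Function.comp, Complex.conj_im]
    constructor
    · intro h; linarith
    · intro h; linarith
  have heval1 : Q.eval 1 = ((∑ k ∈ Finset.Icc (-(N:ℤ)) (N:ℤ), b k : ℝ) : ℂ) := by
    rw [hQdef, Polynomial.eval_finset_sum]
    push_cast
    congr 1
    funext k
    simp
  have hfactor : Q.eval 1 = (b d : ℂ) * (Q.roots.map (fun r => 1 - r)).prod := by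
    conv_lhs => rw [hsplits.eq_prod_roots]
    rw [Polynomial.eval_mul, Polynomial.eval_C, hlead, Polynomial.eval_multiset_prod,
      Multiset.map_map]
    refine congrArg _ (congrArg _ (Multiset.map_congr rfl ?_))
    intro r _
    simp
  -- product over roots splits along the partition
  have hprod_split : (Q.roots.map (fun r => 1 - r)).prod
      = (P0.map (fun r => 1 - r)).prod
        * ((Pp.map (fun r => 1 - r)).prod * (Pm.map (fun r => 1 - r)).prod) := by
    conv_lhs => rw [aux_partition Q.roots]
    rw [Multiset.map_add, Multiset.map_add, Multiset.prod_add, Multiset.prod_add]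
  set w : ℂ := (Pp.map (fun r => 1 - r)).prod with hw
  have hprod_pm : (Pm.map (fun r => 1 - r)).prod = (starRingEnd ℂ) w := by
    rw [hPmPp, Multiset.map_map, hw]
    have : ((fun r : ℂ => 1 - r) ∘ (starRingEnd ℂ)) = (starRingEnd ℂ) ∘ (fun r : ℂ => 1 - r) := by
      funext r
      simp [map_sub]
    rw [this, ← Multiset.map_map, ← map_multiset_prod]
  set S : Multiset ℝ := P0.map (fun r => 1 - r.re) with hS
  have hprod_p0 : (P0.map (fun r => 1 - r)).prod = ((S.prod : ℝ) : ℂ) := by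
    have h1 : P0.map (fun r => 1 - r) = S.map (fun x : ℝ => (x : ℂ)) := by
      rw [hS, Multiset.map_map]
      apply Multiset.map_congr rfl
      intro r hr
      have him : r.im = 0 := (Multiset.mem_filter.mp hr).2
      apply Complex.ext
      · simp
      · simp [him]
    rw [h1]
    have := map_multiset_prod Complex.ofRealHom S
    simpa using this.symm
  -- nonvanishing facts
  have hone_sub_ne : ∀ r ∈ Q.roots, (1 : ℂ) - r ≠ 0 := by
    intro r hr h
    have : r = 1 := by linear_combination -h
    apply hroot_ne r hr
    rw [this]
    simp
  have hwne : w ≠ 0 := by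
    rw [hw]
    intro h
    rcases Multiset.prod_eq_zero_iff.mp h with hmem
    rcases Multiset.mem_map.mp hmem with ⟨r, hr, hr2⟩
    exact hone_sub_ne r (Multiset.mem_of_mem_filter hr) hr2
  have hSne : ∀ x ∈ S, x ≠ 0 := by
    intro x hx
    rcases Multiset.mem_map.mp hx with ⟨r, hr, rfl⟩
    have him : r.im = 0 := (Multiset.mem_filter.mp hr).2
    intro h
    apply hone_sub_ne r (Multiset.mem_of_mem_filter hr)
    apply Complex.ext
    · simpa using h
    · simp [him]
  have hSprod_ne : S.prod ≠ 0 := by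
    intro h
    exact hSne 0 (Multiset.prod_eq_zero_iff.mp h) rfl
  have hnsq_pos : 0 < Complex.normSq w := Complex.normSq_pos.mpr hwne
  -- the real identity
  set e : ℝ := ∑ k ∈ Finset.Icc (-(N:ℤ)) (N:ℤ), b k with he
  have hene : (e : ℂ) ≠ 0 := by
    rw [← heval1]
    exact hcirc 1 (by simp)
  have hkey : e = b d * S.prod * Complex.normSq w := by
    have : (e : ℂ) = ((b d * S.prod * Complex.normSq w : ℝ) : ℂ) := by
      rw [← heval1, hfactor, hprod_split, hprod_p0, hprod_pm, Complex.mul_conj]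
      push_cast
      ring
    exact_mod_cast this
  have hepos_iff : (0 < e) ↔ (0 < b d ↔ 0 < S.prod) := by
    rcases hd.lt_or_gt with hbd | hbd <;> rcases hSprod_ne.lt_or_gt with hsp | hsp
    · have hpos : 0 < e := by
        rw [hkey]; nlinarith [mul_pos (mul_pos_of_neg_of_neg hbd hsp) hnsq_pos]
      constructor
      · intro _; constructor <;> intro h <;> linarith
      · intro _; exact hpos
    · have hneg : e < 0 := by
        rw [hkey]; nlinarith [mul_pos (mul_pos (neg_pos.mpr hbd) hsp) hnsq_pos]
      constructor
      · intro h; linarith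
      · intro h; exfalso; have := h.mpr hsp; linarith
    · have hneg : e < 0 := by
        rw [hkey]; nlinarith [mul_pos (mul_pos hbd (neg_pos.mpr hsp)) hnsq_pos]
      constructor
      · intro h; linarith
      · intro h; exfalso; have := h.mp hbd; linarith
    · have hpos : 0 < e := by
        rw [hkey]; nlinarith [mul_pos (mul_pos hbd hsp) hnsq_pos]
      constructor
      · intro _; constructor <;> intro h <;> linarith
      · intro _; exact hpos
  have hrplus : (S.filter (fun x => x < 0)).card
      = (Q.roots.filter (fun z => z.im = 0 ∧ 1 < z.re)).card := by
    rw [hS, Multiset.filter_map, Multiset.card_map, hP0, Multiset.filter_filter]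
    congr 1
    apply Multiset.filter_congr
    intro z _
    constructor
    · rintro ⟨h1, h2⟩
      exact ⟨h2, by simp only [Function.comp] at h1; linarith⟩
    · rintro ⟨h1, h2⟩
      exact ⟨by simp only [Function.comp]; linarith, h1⟩
  have hsign : Even ((Q.roots.filter (fun z => z.im = 0 ∧ 1 < z.re)).card)
      ↔ ((0 < b d) ↔ 0 < e) := by
    rw [← hrplus, ← aux_prod_pos_iff S hSne]
    constructor
    · intro hsp
      constructor
      · intro hbd; exact hepos_iff.mpr ⟨fun _ => hsp, fun _ => hbd⟩
      · intro hepos; exact (hepos_iff.mp hepos).mpr hsp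
    · intro h
      by_cases hbd : 0 < b d
      · exact (hepos_iff.mp (h.mp hbd)).mp hbd
      · by_contra hsp
        exact hbd (h.mpr (hepos_iff.mpr (iff_of_false hbd hsp)))
  exact ⟨hcard, hcount, hsign⟩

/-- Let `(p_t)` be a continuous family of nonzero real Laurent polynomials
(coefficients `c t k`, supported in `[-N, N]`), none of which vanishes on the unit circle,
for `t ∈ [0,1]`.  With `d` the top degree, `s` the sign of the leading coefficient,
`r₊` (resp. `r₋`) the number of real roots `> 1` (resp. `< −1`) and `p` the number of pairs
of complex-conjugate non-real roots of modulus `> 1` (all counted with multiplicity, computed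
from the associated ordinary polynomial `q t = z^N · p_t`), the quantity
`A_t = (s − 1 − d) + 2p + r₋ − r₊` is constant modulo `4`. -/
theorem laurent_root_count_mod_four_invariant
    (N : ℕ) (c : ℝ → ℤ → ℝ)
    (hsupp : ∀ t k, (N : ℤ) < |k| → c t k = 0)
    (hcont : ∀ k, Continuous fun t => c t k)
    (hne : ∀ t ∈ Set.Icc (0:ℝ) 1, ∃ k, c t k ≠ 0)
    (hcircle : ∀ t ∈ Set.Icc (0:ℝ) 1, ∀ z : ℂ, ‖z‖ = 1 →
      (∑ k ∈ Finset.Icc (-(N:ℤ)) (N:ℤ), (c t k : ℂ) * z ^ k) ≠ 0)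
    (q : ℝ → Polynomial ℂ)
    (hq : ∀ t, q t = ∑ k ∈ Finset.Icc (-(N:ℤ)) (N:ℤ),
      Polynomial.C ((c t k : ℂ)) * Polynomial.X ^ (k + N).toNat)
    (A : ℝ → ℤ)
    (hA : ∀ t ∈ Set.Icc (0:ℝ) 1, ∀ d : ℤ,
      (c t d ≠ 0 ∧ ∀ k, d < k → c t k = 0) →
      A t = ((if 0 < c t d then 1 else -1) - 1 - d)
        + 2 * (((q t).roots.filter (fun z => 0 < z.im ∧ 1 < ‖z‖)).card : ℤ)
        + (((q t).roots.filter (fun z => z.im = 0 ∧ z.re < -1)).card : ℤ)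
        - (((q t).roots.filter (fun z => z.im = 0 ∧ 1 < z.re)).card : ℤ)) :
    ∀ t₀ ∈ Set.Icc (0:ℝ) 1, ∀ t₁ ∈ Set.Icc (0:ℝ) 1,
      (A t₀ : ZMod 4) = (A t₁ : ZMod 4) := by
  -- the sum of coefficients (value at 1)
  set E : ℝ → ℝ := fun t => ∑ k ∈ Finset.Icc (-(N:ℤ)) (N:ℤ), c t k with hE
  -- eval formula
  have heval : ∀ (t : ℝ) (z : ℂ),
      (q t).eval z = ∑ k ∈ Finset.Icc (-(N:ℤ)) (N:ℤ), (c t k : ℂ) * z ^ (k + N).toNat := by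
    intro t z
    rw [hq, Polynomial.eval_finset_sum]
    simp
  -- nonvanishing of q on the circle, for t ∈ [0,1]
  have hevalcirc : ∀ t ∈ Set.Icc (0:ℝ) 1, ∀ z : ℂ, ‖z‖ = 1 → (q t).eval z ≠ 0 := by
    intro t ht z hz
    have hz0 : z ≠ 0 := by
      intro h; rw [h] at hz; simp at hz
    have hterm : ∀ k ∈ Finset.Icc (-(N:ℤ)) (N:ℤ),
        (c t k : ℂ) * z ^ (k + N).toNat = ((c t k : ℂ) * z ^ k) * z ^ (N:ℕ) := by
      intro k hk
      rw [Finset.mem_Icc] at hk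
      have h0 : (0:ℤ) ≤ k + N := by omega
      have : (z : ℂ) ^ (k + N).toNat = z ^ ((k + N : ℤ)) := by
        rw [← zpow_natCast, Int.toNat_of_nonneg h0]
      rw [this, zpow_add₀ hz0, ← zpow_natCast z N]
      ring
    rw [heval, Finset.sum_congr rfl hterm, ← Finset.sum_mul]
    exact mul_ne_zero (hcircle t ht z hz) (pow_ne_zero _ hz0)
  -- E t ≠ 0 on [0,1]
  have hEne : ∀ t ∈ Set.Icc (0:ℝ) 1, E t ≠ 0 := by
    intro t ht h
    apply hevalcirc t ht 1 (by simp)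
    rw [heval]
    simp only [one_pow, mul_one]
    rw [show (∑ k ∈ Finset.Icc (-(N:ℤ)) (N:ℤ), ((c t k : ℝ) : ℂ)) = ((E t : ℝ) : ℂ) by push_cast [hE]; norm_num]
    rw [h]; simp
  -- E has constant sign on [0,1]
  have hEcont : Continuous E := continuous_finset_sum _ (fun k _ => hcont k)
  have hEsign : ∀ t₀ ∈ Set.Icc (0:ℝ) 1, ∀ t₁ ∈ Set.Icc (0:ℝ) 1,
      ((0 < E t₀) ↔ (0 < E t₁)) := by
    intro t₀ ht₀ t₁ ht₁
    by_contra hcon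
    have hiv := intermediate_value_uIcc (a := t₀) (b := t₁) (f := E) hEcont.continuousOn
    have hni := not_iff.mp hcon
    have h0 : (0:ℝ) ∈ Set.uIcc (E t₀) (E t₁) := by
      rw [Set.mem_uIcc]
      by_cases h₀ : 0 < E t₀
      · have h₁ : ¬ 0 < E t₁ := fun hb => (hni.mpr hb) h₀
        right
        constructor <;> linarith [not_lt.mp h₁]
      · have h₁ : 0 < E t₁ := hni.mp h₀
        left
        constructor <;> linarith [not_lt.mp h₀]
    obtain ⟨s, hs, hs0⟩ := hiv h0
    have hsmem : s ∈ Set.Icc (0:ℝ) 1 := Set.uIcc_subset_Icc ht₀ ht₁ hs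
    exact hEne s hsmem hs0
  -- the per-parameter mod-4 identity
  have hmain : ∀ t ∈ Set.Icc (0:ℝ) 1,
      ((A t : ZMod 4)) = (if 0 < E t then (1 : ZMod 4) else -1) - 1 + (N : ZMod 4)
        - ((((q t).roots.filter (fun z => ‖z‖ < 1)).card : ℕ) : ZMod 4) := by
    intro t ht
    -- the top degree
    set Sf : Finset ℤ := (Finset.Icc (-(N:ℤ)) (N:ℤ)).filter (fun k => c t k ≠ 0) with hSf
    have hSfmem : ∀ k : ℤ, k ∈ Sf ↔ ((-(N:ℤ) ≤ k ∧ k ≤ N) ∧ c t k ≠ 0) := by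
      intro k
      rw [hSf, Finset.mem_filter, Finset.mem_Icc]
    have hSfne : Sf.Nonempty := by
      obtain ⟨k, hk⟩ := hne t ht
      refine ⟨k, (hSfmem k).mpr ?_⟩
      have hkN : ¬ (N:ℤ) < |k| := fun hab => hk (hsupp t k hab)
      exact ⟨abs_le.mp (not_lt.mp hkN), hk⟩
    set d : ℤ := Sf.max' hSfne with hdd
    have hdmem := (hSfmem d).mp (Sf.max'_mem hSfne)
    have hd : c t d ≠ 0 := hdmem.2
    have hdlb : -(N:ℤ) ≤ d := hdmem.1.1
    have hdub : d ≤ (N:ℤ) := hdmem.1.2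
    have hdt : ∀ k, d < k → c t k = 0 := by
      intro k hk
      by_contra h
      have hkN : ¬ (N:ℤ) < |k| := fun hab => h (hsupp t k hab)
      have hmem : k ∈ Sf := (hSfmem k).mpr ⟨abs_le.mp (not_lt.mp hkN), h⟩
      exact absurd (Finset.le_max' Sf k hmem) (not_le.mpr hk)
    obtain ⟨hnat, hlead, hQne⟩ := aux_deg N (c t) d hd hdt hdlb hdub (q t) (hq t)
    obtain ⟨hcard, hcount, hsign⟩ :=
      aux_key N (c t) d hd hdt hdlb hdub (q t) (hq t) hnat hlead hQne (hevalcirc t ht)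
    have hAt := hA t ht d ⟨hd, hdt⟩
    have hEt : E t = ∑ k ∈ Finset.Icc (-(N:ℤ)) (N:ℤ), c t k := by rw [hE]
    rw [← hEt] at hsign
    set rp : ℕ := ((q t).roots.filter (fun z => z.im = 0 ∧ 1 < z.re)).card with hrp
    set rm : ℕ := ((q t).roots.filter (fun z => z.im = 0 ∧ z.re < -1)).card with hrm
    set pp : ℕ := ((q t).roots.filter (fun z => 0 < z.im ∧ 1 < ‖z‖)).card with hpp
    set II : ℕ := ((q t).roots.filter (fun z => ‖z‖ < 1)).card with hII
    have hAint : A t = (if 0 < c t d then (1:ℤ) else -1) - 1 + (N:ℤ) - (II : ℤ) - 2 * (rp : ℤ) := by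
      rw [hAt]
      have h1 : (Multiset.card (q t).roots : ℤ) = d + N := hcard
      have h2 : (II : ℤ) + (rp : ℤ) + (rm : ℤ) + 2 * (pp : ℤ) = (Multiset.card (q t).roots : ℤ) :=
        hcount
      linarith
    have h4 : (4 : ZMod 4) = 0 := by decide
    by_cases hbd : 0 < c t d <;> by_cases hsp : 0 < E t
    · have hev : Even rp := hsign.mpr (iff_of_true hbd hsp)
      obtain ⟨m, hm⟩ := hev
      rw [if_pos hbd] at hAint
      rw [if_pos hsp, hAint, hm]
      push_cast
      linear_combination (-(m : ZMod 4)) * h4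
    · have hodd : ¬ Even rp := fun hev => hsp ((hsign.mp hev).mp hbd)
      obtain ⟨m, hm⟩ := Nat.not_even_iff_odd.mp hodd
      rw [if_pos hbd] at hAint
      rw [if_neg hsp, hAint, hm]
      push_cast
      linear_combination (-(m : ZMod 4)) * h4
    · have hodd : ¬ Even rp := fun hev => hbd ((hsign.mp hev).mpr hsp)
      obtain ⟨m, hm⟩ := Nat.not_even_iff_odd.mp hodd
      rw [if_neg hbd] at hAint
      rw [if_pos hsp, hAint, hm]
      push_cast
      linear_combination (-(m : ZMod 4) - 1) * h4
    · have hev : Even rp := hsign.mpr (iff_of_false hbd hsp)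
      obtain ⟨m, hm⟩ := hev
      rw [if_neg hbd] at hAint
      rw [if_neg hsp, hAint, hm]
      push_cast
      linear_combination (-(m : ZMod 4)) * h4
  -- constancy of the inside-root count, via clamping
  set cl : ℝ → ℝ := fun t => max 0 (min 1 t) with hcl
  have hclcont : Continuous cl := continuous_const.max (continuous_const.min continuous_id)
  have hclmem : ∀ t, cl t ∈ Set.Icc (0:ℝ) 1 := by
    intro t
    constructor
    · exact le_max_left _ _
    · apply max_le (by norm_num) (min_le_left _ _)
  have hclid : ∀ t ∈ Set.Icc (0:ℝ) 1, cl t = t := by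
    intro t ht
    rw [hcl]
    simp only
    rw [min_eq_right ht.2, max_eq_right ht.1]
  have hder : ∀ (t:ℝ) (z:ℂ), (q t).derivative.eval z
      = ∑ k ∈ Finset.Icc (-(N:ℤ)) (N:ℤ),
          (c t k : ℂ) * ((((k+N).toNat : ℕ) : ℂ) * z ^ ((k+N).toNat - 1)) := by
    intro t z
    rw [hq, Polynomial.derivative_sum, Polynomial.eval_finset_sum]
    apply Finset.sum_congr rfl
    intro k _
    rw [Polynomial.derivative_C_mul, Polynomial.derivative_X_pow]
    simp
  have hcount_const : ∀ s₀ ∈ Set.Icc (0:ℝ) 1, ∀ s₁ ∈ Set.Icc (0:ℝ) 1,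
      (((q s₀).roots.filter (fun z => ‖z‖ < 1)).card : ℕ)
        = (((q s₁).roots.filter (fun z => ‖z‖ < 1)).card : ℕ) := by
    intro s₀ hs₀ s₁ hs₁
    have hev : Continuous fun p : ℝ × ℂ => ((fun t => q (cl t)) p.1).eval p.2 := by
      have hfn : (fun p : ℝ × ℂ => (q (cl p.1)).eval p.2)
          = fun p : ℝ × ℂ => ∑ k ∈ Finset.Icc (-(N:ℤ)) (N:ℤ),
              ((c (cl p.1) k : ℝ) : ℂ) * p.2 ^ (k + N).toNat := by
        funext p
        exact heval _ _
      rw [hfn]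
      apply continuous_finset_sum
      intro k _
      exact ((Complex.continuous_ofReal.comp ((hcont k).comp hclcont)).comp
        continuous_fst).mul (continuous_snd.pow _)
    have hdev : Continuous fun p : ℝ × ℂ => ((fun t => q (cl t)) p.1).derivative.eval p.2 := by
      have hfn : (fun p : ℝ × ℂ => (q (cl p.1)).derivative.eval p.2)
          = fun p : ℝ × ℂ => ∑ k ∈ Finset.Icc (-(N:ℤ)) (N:ℤ),
              ((c (cl p.1) k : ℝ) : ℂ) * ((((k+N).toNat : ℕ) : ℂ) * p.2 ^ ((k + N).toNat - 1)) := by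
        funext p
        exact hder _ _
      rw [hfn]
      apply continuous_finset_sum
      intro k _
      exact ((Complex.continuous_ofReal.comp ((hcont k).comp hclcont)).comp
        continuous_fst).mul (continuous_const.mul (continuous_snd.pow _))
    have hc : ∀ s, ∀ z : ℂ, ‖z‖ = 1 → ((fun t => q (cl t)) s).eval z ≠ 0 :=
      fun s z hz => hevalcirc (cl s) (hclmem s) z hz
    have := aux_count_const (fun t => q (cl t)) hev hdev hc s₀ s₁
    rwa [hclid s₀ hs₀, hclid s₁ hs₁] at this
  -- conclusion
  intro t₀ ht₀ t₁ ht₁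
  rw [hmain t₀ ht₀, hmain t₁ ht₁, hcount_const t₀ ht₀ t₁ ht₁,
    if_congr (hEsign t₀ ht₀ t₁ ht₁) rfl rfl]
end

section
/- Every subgroup H of finite index in the Klein bottle group π₁(K) = ⟨a, b | a b a^{−1} b⟩ that is itself isomorphic to π₁(K) is of the form H = ⟨a^n b^p, b^m⟩ for some integers m ≥ 1, n ≥ 1 with n odd, and p ∈ ℤ. -/
/-- The single relator `a b a⁻¹ b` of the Klein bottle group. -/
def kleinRels : Set (FreeGroup Bool) :=
  {FreeGroup.of true * FreeGroup.of false * (FreeGroup.of true)⁻¹ * FreeGroup.of false}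

/-- The Klein bottle group `π₁(K) = ⟨a, b | a b a⁻¹ b⟩`. -/
abbrev KleinGroup := PresentedGroup kleinRels

/-- The generator `a` of the Klein bottle group. -/
def ka : KleinGroup := PresentedGroup.of true

/-- The generator `b` of the Klein bottle group. -/
def kb : KleinGroup := PresentedGroup.of false

namespace KleinAux

abbrev M := Multiplicative ℤ

def ι : MulAut M where
  toFun := (·⁻¹)
  invFun := (·⁻¹)
  left_inv := inv_inv
  right_inv := inv_inv
  map_mul' := mul_inv

def φ : M →* MulAut M := zpowersHom _ ι

abbrev G := M ⋊[φ] M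

def u : M := Multiplicative.ofAdd 1

lemma φ_u (x : M) : φ u x = x⁻¹ := by
  simp [φ, u, zpowersHom_apply, ι]

lemma frel : ∀ r ∈ kleinRels, FreeGroup.lift
    (fun x : Bool => if x then (SemidirectProduct.inr u : G) else SemidirectProduct.inl u) r = 1 := by
  rintro r hr
  simp only [kleinRels, Set.mem_singleton_iff] at hr
  subst hr
  simp only [map_mul, map_inv, FreeGroup.lift_apply_of, Bool.false_eq_true, if_true, if_false]
  rw [← map_inv, ← SemidirectProduct.inl_aut, φ_u]
  rw [← map_mul, inv_mul_cancel, map_one]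

def f : KleinGroup →* G := PresentedGroup.toGroup frel

lemma f_ka : f ka = SemidirectProduct.inr u := PresentedGroup.toGroup.of frel
lemma f_kb : f kb = SemidirectProduct.inl u := PresentedGroup.toGroup.of frel

lemma u_zpow (j : ℤ) : u ^ j = Multiplicative.ofAdd j := by
  simp [u, ← ofAdd_zsmul]

lemma f_nf (i j : ℤ) : f (kb ^ j * ka ^ i) =
    ⟨Multiplicative.ofAdd j, Multiplicative.ofAdd i⟩ := by
  rw [map_mul, map_zpow, map_zpow, f_ka, f_kb, ← map_zpow, ← map_zpow, u_zpow, u_zpow,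
    ← SemidirectProduct.mk_eq_inl_mul_inr]

end KleinAux

namespace KleinAux

lemma rel1 : ka * kb * ka⁻¹ * kb = 1 := by
  have h : (FreeGroup.of true * FreeGroup.of false * (FreeGroup.of true)⁻¹ * FreeGroup.of false)
      ∈ Subgroup.normalClosure kleinRels :=
    Subgroup.subset_normalClosure rfl
  have : PresentedGroup.mk kleinRels
      (FreeGroup.of true * FreeGroup.of false * (FreeGroup.of true)⁻¹ * FreeGroup.of false) = 1 :=
    (QuotientGroup.eq_one_iff _).mpr h
  simpa [map_mul, map_inv, ka, kb, PresentedGroup.of] using this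

lemma rel : ka * kb * ka⁻¹ = kb⁻¹ :=
  eq_inv_of_mul_eq_one_left rel1

lemma conj_b (j : ℤ) : ka * kb ^ j * ka⁻¹ = kb ^ (-j) := by
  have h := map_zpow (MulAut.conj ka) kb j
  simp only [MulAut.conj_apply] at h
  rw [h, rel, inv_zpow, ← zpow_neg]

lemma a_swap (j : ℤ) : ka * kb ^ j = kb ^ (-j) * ka := by
  have := conj_b j
  rw [← this]; group

lemma ainv_swap (j : ℤ) : ka⁻¹ * kb ^ j = kb ^ (-j) * ka⁻¹ := by
  have := conj_b (-j)
  rw [neg_neg] at this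
  rw [← this]; group

lemma swap (i : ℤ) : ∀ j : ℤ, ka ^ i * kb ^ j = kb ^ ((i.negOnePow : ℤ) * j) * ka ^ i := by
  induction i using Int.induction_on with
  | zero => intro j; simp
  | succ k ih =>
    intro j
    calc ka ^ ((k : ℤ) + 1) * kb ^ j = ka ^ (k : ℤ) * (ka * kb ^ j) := by
          rw [zpow_add_one, mul_assoc]
      _ = ka ^ (k : ℤ) * kb ^ (-j) * ka := by rw [a_swap, mul_assoc]
      _ = kb ^ (((k : ℤ).negOnePow : ℤ) * (-j)) * ka ^ (k : ℤ) * ka := by rw [ih (-j)]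
      _ = kb ^ ((((k : ℤ) + 1).negOnePow : ℤ) * j) * ka ^ ((k : ℤ) + 1) := by
          rw [mul_assoc, ← zpow_add_one]
          congr 2
          rw [Int.negOnePow_succ]
          push_cast
          ring
  | pred k ih =>
    intro j
    calc ka ^ (-(k : ℤ) - 1) * kb ^ j = ka ^ (-(k : ℤ)) * (ka⁻¹ * kb ^ j) := by
          rw [zpow_sub_one, mul_assoc]
      _ = ka ^ (-(k : ℤ)) * kb ^ (-j) * ka⁻¹ := by rw [ainv_swap, mul_assoc]
      _ = kb ^ (((-(k : ℤ)).negOnePow : ℤ) * (-j)) * ka ^ (-(k : ℤ)) * ka⁻¹ := by rw [ih (-j)]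
      _ = kb ^ (((-(k : ℤ) - 1).negOnePow : ℤ) * j) * ka ^ (-(k : ℤ) - 1) := by
          rw [mul_assoc, ← zpow_sub_one]
          congr 2
          rw [Int.negOnePow_sub, Int.negOnePow_one]
          push_cast
          ring

lemma exists_nf (x : KleinGroup) : ∃ i j : ℤ, x = kb ^ j * ka ^ i := by
  have hx : x ∈ Subgroup.closure (Set.range (PresentedGroup.of : Bool → KleinGroup)) := by
    rw [PresentedGroup.closure_range_of]; trivial
  induction hx using Subgroup.closure_induction with
  | mem y hy =>
    obtain ⟨c, rfl⟩ := hy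
    cases c
    · exact ⟨0, 1, by simp [kb]⟩
    · exact ⟨1, 0, by simp [ka]⟩
  | one => exact ⟨0, 0, by simp⟩
  | mul y z _ _ hy hz =>
    obtain ⟨i, j, rfl⟩ := hy
    obtain ⟨i', j', rfl⟩ := hz
    refine ⟨i + i', j + ((i.negOnePow : ℤ) * j'), ?_⟩
    rw [mul_assoc, ← mul_assoc (ka ^ i), swap i j', ← mul_assoc, ← mul_assoc, ← zpow_add,
      mul_assoc, ← zpow_add]
  | inv y _ hy =>
    obtain ⟨i, j, rfl⟩ := hy
    refine ⟨-i, ((-i).negOnePow : ℤ) * (-j), ?_⟩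
    rw [mul_inv_rev, ← zpow_neg, ← zpow_neg, swap (-i) (-j)]

lemma nf_inj {i j i' j' : ℤ} (h : kb ^ j * ka ^ i = kb ^ j' * ka ^ i') : j = j' ∧ i = i' := by
  have := congrArg f h
  rw [f_nf, f_nf] at this
  constructor
  · simpa using congrArg (fun z => Multiplicative.toAdd (SemidirectProduct.left z)) this
  · simpa using congrArg (fun z => Multiplicative.toAdd (SemidirectProduct.right z)) this

end KleinAux

namespace KleinAux

def ρ : KleinGroup →* M := SemidirectProduct.rightHom.comp f

lemma ρ_nf (i j : ℤ) : ρ (kb ^ j * ka ^ i) = Multiplicative.ofAdd i := by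
  show SemidirectProduct.rightHom (f (kb ^ j * ka ^ i)) = _
  rw [f_nf]; rfl

lemma ρ_ka_pow (i : ℤ) : ρ (ka ^ i) = Multiplicative.ofAdd i := by
  simpa using ρ_nf i 0

lemma kb_zpow_inj {s s' : ℤ} (h : kb ^ s = kb ^ s') : s = s' := by
  have : kb ^ s * ka ^ (0:ℤ) = kb ^ s' * ka ^ (0:ℤ) := by simpa using h
  exact (nf_inj this).1

end KleinAux

open KleinAux in
theorem klein_selfcover_subgroups' (H : Subgroup KleinGroup)
    (hfin : H.FiniteIndex) (hiso : Nonempty (H ≃* KleinGroup)) :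
    ∃ (m n : ℕ) (p : ℤ), 1 ≤ m ∧ 1 ≤ n ∧ Odd n ∧
      H = Subgroup.closure {ka ^ n * kb ^ p, kb ^ m} := by
  classical
  obtain ⟨e⟩ := hiso
  have hidx : H.index ≠ 0 := hfin.index_ne_zero
  -- the subgroup of exponents j with kb ^ j ∈ H
  set J : AddSubgroup ℤ :=
    { carrier := {j | kb ^ j ∈ H}
      zero_mem' := by simpa using H.one_mem
      add_mem' := fun {a b} ha hb => by
        show kb ^ (a + b) ∈ H
        rw [zpow_add]; exact H.mul_mem ha hb
      neg_mem' := fun {a} ha => by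
        show kb ^ (-a) ∈ H
        rw [zpow_neg]; exact H.inv_mem ha } with hJdef
  -- the subgroup of "a-exponents" of elements of H
  set I : AddSubgroup ℤ :=
    { carrier := {i | ∃ x, x ∈ H ∧ ρ x = Multiplicative.ofAdd i}
      zero_mem' := ⟨1, H.one_mem, by simp⟩
      add_mem' := fun {a b} ha hb => by
        obtain ⟨x, hx, hx'⟩ := ha; obtain ⟨y, hy, hy'⟩ := hb
        exact ⟨x * y, H.mul_mem hx hy, by rw [map_mul, hx', hy']; rfl⟩
      neg_mem' := fun {a} ha => by
        obtain ⟨x, hx, hx'⟩ := ha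
        exact ⟨x⁻¹, H.inv_mem hx, by rw [map_inv, hx']; rfl⟩ } with hIdef
  obtain ⟨m0, hJ⟩ := Int.subgroup_cyclic J
  obtain ⟨n0, hI⟩ := Int.subgroup_cyclic I
  have memJ : ∀ x : ℤ, x ∈ J ↔ m0 ∣ x := by
    intro x
    rw [hJ, AddSubgroup.mem_closure_singleton]
    simp only [smul_eq_mul]
    constructor
    · rintro ⟨c, rfl⟩; exact Dvd.intro_left c rfl
    · rintro ⟨c, rfl⟩; exact ⟨c, mul_comm c m0⟩
  have memI : ∀ x : ℤ, x ∈ I ↔ n0 ∣ x := by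
    intro x
    rw [hI, AddSubgroup.mem_closure_singleton]
    simp only [smul_eq_mul]
    constructor
    · rintro ⟨c, rfl⟩; exact Dvd.intro_left c rfl
    · rintro ⟨c, rfl⟩; exact ⟨c, mul_comm c n0⟩
  -- m0 ≠ 0
  obtain ⟨k, hk0, -, hkH⟩ := Subgroup.exists_pow_mem_of_index_ne_zero hidx kb
  have hkJ : (k : ℤ) ∈ J := by
    show kb ^ (k : ℤ) ∈ H
    rw [zpow_natCast]; exact hkH
  have hm0 : m0 ≠ 0 := by
    rintro rfl
    obtain ⟨c, hc⟩ := (memJ _).mp hkJ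
    omega
  set m := m0.natAbs with hm
  have hm1 : 1 ≤ m := Nat.one_le_iff_ne_zero.mpr fun h => hm0 (Int.natAbs_eq_zero.mp h)
  have hmJ : (m : ℤ) ∈ J := (memJ _).mpr (Int.dvd_natAbs.mpr dvd_rfl)
  have hkbm : kb ^ (m : ℤ) ∈ H := hmJ
  have memJ' : ∀ x : ℤ, x ∈ J ↔ (m : ℤ) ∣ x := by
    intro x; rw [memJ, hm, Int.natAbs_dvd]
  -- n0 ≠ 0
  obtain ⟨k', hk'0, -, hk'H⟩ := Subgroup.exists_pow_mem_of_index_ne_zero hidx ka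
  have hkI : (k' : ℤ) ∈ I := by
    refine ⟨ka ^ (k' : ℤ), ?_, ρ_ka_pow _⟩
    rw [zpow_natCast]; exact hk'H
  have hn0 : n0 ≠ 0 := by
    rintro rfl
    obtain ⟨c, hc⟩ := (memI _).mp hkI
    omega
  set n := n0.natAbs with hn
  have hn1 : 1 ≤ n := Nat.one_le_iff_ne_zero.mpr fun h => hn0 (Int.natAbs_eq_zero.mp h)
  have memI' : ∀ x : ℤ, x ∈ I ↔ (n : ℤ) ∣ x := by
    intro x; rw [memI, hn, Int.natAbs_dvd]
  -- the element h0 = kb^q * ka^n of H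
  obtain ⟨h0, h0H, hρh0⟩ : ((n : ℤ) ∈ I) := (memI' _).mpr dvd_rfl
  obtain ⟨i0, q, hnf⟩ := exists_nf h0
  have hi0 : i0 = (n : ℤ) := by
    have h1 : ρ h0 = Multiplicative.ofAdd i0 := by rw [hnf]; exact ρ_nf _ _
    have := h1.symm.trans hρh0
    exact congrArg Multiplicative.toAdd this
  rw [hi0] at hnf
  set p : ℤ := ((((n : ℤ)).negOnePow : ℤˣ) : ℤ) * q with hp
  have hunit : ((((n : ℤ)).negOnePow : ℤˣ) : ℤ) * ((((n : ℤ)).negOnePow : ℤˣ) : ℤ) = 1 := by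
    rw [← Units.val_mul, Int.units_mul_self, Units.val_one]
  have hexp : ((((n : ℤ)).negOnePow : ℤˣ) : ℤ) * p = q := by
    rw [hp, ← mul_assoc, hunit, one_mul]
  have hgen : ka ^ (n : ℤ) * kb ^ p = h0 := by
    rw [swap (n : ℤ) p, hexp]; exact hnf.symm
  have hgen' : ka ^ n * kb ^ p = h0 := by
    rw [← hgen, zpow_natCast]
  refine ⟨m, n, p, hm1, hn1, ?_, ?_⟩
  · -- n is odd
    by_contra hodd
    have hEn : Even ((n : ℤ)) := by
      rw [Nat.not_odd_iff_even] at hodd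
      exact (Int.even_coe_nat n).mpr hodd
    have key : ∀ (a b c d : ℤ), Even b →
        kb ^ a * ka ^ b * (kb ^ c * ka ^ d) = kb ^ (a + c) * ka ^ (b + d) := by
      intro a b c d hb
      rw [mul_assoc, ← mul_assoc (ka ^ b), swap b c, Int.negOnePow_even _ hb, Units.val_one,
        one_mul, ← mul_assoc, ← mul_assoc, ← zpow_add, mul_assoc, ← zpow_add]
    have hcomm : ∀ x ∈ H, ∀ y ∈ H, x * y = y * x := by
      intro x hx y hy
      obtain ⟨i, j, rfl⟩ := exists_nf x
      obtain ⟨i', j', rfl⟩ := exists_nf y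
      obtain ⟨c, rfl⟩ := (memI' i).mp ⟨_, hx, ρ_nf i j⟩
      obtain ⟨c', rfl⟩ := (memI' i').mp ⟨_, hy, ρ_nf i' j'⟩
      rw [key _ _ _ _ (hEn.mul_right c), key _ _ _ _ (hEn.mul_right c'), add_comm j,
        add_comm ((n : ℤ) * c)]
    have hab : ∀ u v : KleinGroup, u * v = v * u := by
      intro u v
      have hx := hcomm _ (e.symm u).2 _ (e.symm v).2
      have h2 : (e.symm u) * (e.symm v) = (e.symm v) * (e.symm u) := Subtype.ext hx
      calc u * v = e (e.symm u) * e (e.symm v) := by simp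
        _ = e ((e.symm u) * (e.symm v)) := (map_mul e _ _).symm
        _ = e ((e.symm v) * (e.symm u)) := by rw [h2]
        _ = v * u := by rw [map_mul]; simp
    have hne : kb ^ (-1 : ℤ) * ka ^ (1 : ℤ) = kb ^ (1 : ℤ) * ka ^ (1 : ℤ) := by
      have h1 := a_swap 1
      rw [zpow_one, zpow_one] at *
      rw [← h1, hab ka kb]
    have := (nf_inj hne).1
    norm_num at this
  · -- H = closure
    apply le_antisymm
    · intro x hx
      obtain ⟨i, j, rfl⟩ := exists_nf x
      obtain ⟨t, ht⟩ := (memI' i).mp ⟨_, hx, ρ_nf i j⟩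
      set w := (h0 ^ t)⁻¹ * (kb ^ j * ka ^ i) with hw
      have hwH : w ∈ H := H.mul_mem (H.inv_mem (H.zpow_mem h0H t)) hx
      obtain ⟨iw, s, hwnf⟩ := exists_nf w
      have hρw1 : ρ w = Multiplicative.ofAdd iw := by rw [hwnf]; exact ρ_nf _ _
      have hρw2 : ρ w = Multiplicative.ofAdd 0 := by
        rw [hw, map_mul, map_inv, map_zpow, hρh0, ρ_nf]
        rw [← ofAdd_zsmul, ← ofAdd_neg, ← ofAdd_add]
        congr 1
        rw [smul_eq_mul, ht]
        ring
      have hiw : iw = 0 := congrArg Multiplicative.toAdd (hρw1.symm.trans hρw2)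
      rw [hiw, zpow_zero, mul_one] at hwnf
      have hsJ : (m : ℤ) ∣ s := (memJ' s).mp (show kb ^ s ∈ H from hwnf ▸ hwH)
      obtain ⟨r, hr⟩ := hsJ
      have hx' : kb ^ j * ka ^ i = h0 ^ t * w := by rw [hw, mul_inv_cancel_left]
      rw [hx', hwnf, hr]
      have hmem1 : h0 ∈ Subgroup.closure {ka ^ n * kb ^ p, kb ^ m} :=
        hgen' ▸ Subgroup.subset_closure (Set.mem_insert _ _)
      have hmem2 : kb ^ (m : ℤ) ∈ Subgroup.closure {ka ^ n * kb ^ p, kb ^ m} := by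
        rw [zpow_natCast]
        exact Subgroup.subset_closure (Set.mem_insert_of_mem _ rfl)
      have hmem3 : kb ^ ((m : ℤ) * r) ∈ Subgroup.closure {ka ^ n * kb ^ p, kb ^ m} := by
        rw [zpow_mul kb (m : ℤ) r]; exact Subgroup.zpow_mem _ hmem2 r
      exact Subgroup.mul_mem _ (Subgroup.zpow_mem _ hmem1 t) hmem3
    · rw [Subgroup.closure_le]
      rintro x (rfl | rfl)
      · exact hgen' ▸ h0H
      · show kb ^ (m : ℕ) ∈ H
        rw [← zpow_natCast]; exact hkbm

/-- Every finite-index subgroup `H` of the Klein bottle group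
`π₁(K) = ⟨a, b | a b a⁻¹ b⟩` which is itself isomorphic to `π₁(K)` is of the form
`H = ⟨a^n b^p, b^m⟩` with `m, n ≥ 1`, `n` odd and `p ∈ ℤ`. -/
theorem klein_selfcover_subgroups (H : Subgroup KleinGroup)
    (hfin : H.FiniteIndex) (hiso : Nonempty (H ≃* KleinGroup)) :
    ∃ (m n : ℕ) (p : ℤ), 1 ≤ m ∧ 1 ≤ n ∧ Odd n ∧
      H = Subgroup.closure {ka ^ n * kb ^ p, kb ^ m} := by
  exact klein_selfcover_subgroups' H hfin hiso
end

section
/- In the Klein bottle group π₁(K) = ⟨a, b | a b a^{−1} b⟩, the set R = {b^i a^j : 0 ≤ i < m, 0 ≤ j < n} is a complete system of representatives for the left cosets of the subgroup H = ⟨a^n, b^m⟩ (n odd): every element g ∈ π₁(K) can be written uniquely as g = r h with r ∈ R and h ∈ H. Moreover, the coset multiplication rules hold: b·(b^i a^j) = b^{i+1} a^j for i < m−1, and b·(b^{m−1} a^j) = a^j · b^{m(−1)^j}; a·(b^i a^j) = b^{m−i} a^{j+1} · b^{m(−1)^j} for 0 < i, j < n−1 (with analogous formulas in the boundary cases j =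 n−1 and i = 0). -/
/-! ### Auxiliary: the sign map -/

def EE (q : ℤ) : ℤ := (Int.negOnePow q : ℤ)

lemma EE_add (q q' : ℤ) : EE (q + q') = EE q * EE q' := by
  simp [EE, Int.negOnePow_add]

lemma EE_zero : EE 0 = 1 := rfl

lemma EE_one : EE 1 = -1 := by simp [EE, Int.negOnePow_one]

lemma EE_mul_self (q : ℤ) : EE q * EE q = 1 := by
  simp [EE, ← Units.val_mul, Int.units_mul_self]

lemma EE_neg (q : ℤ) : EE (-q) = EE q := by simp [EE, Int.negOnePow_neg]

lemma EE_natCast (j : ℕ) : EE j = (-1 : ℤ) ^ j := by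
  induction j with
  | zero => rfl
  | succ k ih =>
      rw [pow_succ]; push_cast; rw [EE_add, ih, EE_one]

/-! ### Auxiliary: the concrete model `ℤ ⋊ ℤ` -/

@[ext] structure KG where
  p : ℤ
  q : ℤ

namespace KG

instance : Group KG where
  mul x y := ⟨x.p + EE x.q * y.p, x.q + y.q⟩
  one := ⟨0, 0⟩
  inv x := ⟨-(EE x.q * x.p), -x.q⟩
  mul_assoc x y z := by
    ext
    · show (x.p + EE x.q * y.p) + EE (x.q + y.q) * z.p
        = x.p + EE x.q * (y.p + EE y.q * z.p)
      rw [EE_add]; ring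
    · show (x.q + y.q) + z.q = x.q + (y.q + z.q); ring
  one_mul x := by
    ext
    · show 0 + EE 0 * x.p = x.p; rw [EE_zero]; ring
    · show 0 + x.q = x.q; ring
  mul_one x := by
    ext
    · show x.p + EE x.q * 0 = x.p; ring
    · show x.q + 0 = x.q; ring
  inv_mul_cancel x := by
    ext
    · show -(EE x.q * x.p) + EE (-x.q) * x.p = 0
      rw [EE_neg]; ring
    · show -x.q + x.q = 0; ring

lemma mul_def (x y : KG) : x * y = ⟨x.p + EE x.q * y.p, x.q + y.q⟩ := rfl

lemma one_def : (1 : KG) = ⟨0, 0⟩ := rfl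

lemma inv_def (x : KG) : x⁻¹ = ⟨-(EE x.q * x.p), -x.q⟩ := rfl

lemma b_zpow (k : ℤ) : (⟨1, 0⟩ : KG) ^ k = ⟨k, 0⟩ := by
  induction k using Int.induction_on with
  | zero => rfl
  | succ k ih => rw [zpow_add_one, ih, mul_def]; simp [EE_zero]
  | pred k ih => rw [zpow_sub_one, ih, mul_inv_eq_iff_eq_mul, mul_def]
                 ext <;> simp [EE_zero]

lemma a_zpow (k : ℤ) : (⟨0, 1⟩ : KG) ^ k = ⟨0, k⟩ := by
  induction k using Int.induction_on with
  | zero => rfl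
  | succ k ih => rw [zpow_add_one, ih, mul_def]; simp
  | pred k ih => rw [zpow_sub_one, ih, mul_inv_eq_iff_eq_mul, mul_def]
                 ext <;> simp

end KG

/-! ### Relations in the Klein bottle group -/

lemma klein_rel : ka * kb * ka⁻¹ * kb = 1 := by
  have h : (PresentedGroup.mk kleinRels)
      (FreeGroup.of true * FreeGroup.of false * (FreeGroup.of true)⁻¹ * FreeGroup.of false)
      = 1 := by
    apply (QuotientGroup.eq_one_iff _).2
    exact Subgroup.subset_normalClosure rfl
  simp only [map_mul, map_inv] at h; exact h

lemma klein_conj : ka * kb * ka⁻¹ = kb⁻¹ := by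
  have := klein_rel
  rw [← eq_inv_iff_mul_eq_one] at this
  exact this

lemma klein_conj_zpow (p : ℤ) : ka * kb ^ p * ka⁻¹ = kb ^ (-p) := by
  rw [← conj_zpow, klein_conj, inv_zpow, zpow_neg]

lemma L1 (p : ℤ) : ka * kb ^ p = kb ^ (-p) * ka := by
  rw [← klein_conj_zpow p]; group

lemma L1' (p : ℤ) : ka⁻¹ * kb ^ p = kb ^ (-p) * ka⁻¹ := by
  have h : ka * kb ^ (-p) = kb ^ p * ka := by rw [L1, neg_neg]
  calc ka⁻¹ * kb ^ p = ka⁻¹ * (kb ^ p * ka) * ka⁻¹ := by group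
    _ = ka⁻¹ * (ka * kb ^ (-p)) * ka⁻¹ := by rw [h]
    _ = kb ^ (-p) * ka⁻¹ := by group

lemma L2 (j : ℤ) : ∀ p : ℤ, ka ^ j * kb ^ p = kb ^ (EE j * p) * ka ^ j := by
  induction j using Int.induction_on with
  | zero => intro p; simp [EE]
  | succ k ih =>
      intro p
      have h1 : EE ((k : ℤ) + 1) * p = EE (k : ℤ) * (-p) := by
        simp [EE, Int.negOnePow_succ]
      calc ka ^ ((k : ℤ) + 1) * kb ^ p = ka ^ (k : ℤ) * (ka * kb ^ p) := by
            rw [zpow_add_one, mul_assoc]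
        _ = ka ^ (k : ℤ) * kb ^ (-p) * ka := by rw [L1, ← mul_assoc]
        _ = kb ^ (EE (k : ℤ) * (-p)) * ka ^ (k : ℤ) * ka := by rw [ih]
        _ = kb ^ (EE ((k : ℤ) + 1) * p) * ka ^ ((k : ℤ) + 1) := by
            rw [h1, zpow_add_one, mul_assoc]
  | pred k ih =>
      intro p
      have h1 : EE (-(k : ℤ) - 1) * p = EE (-(k : ℤ)) * (-p) := by
        simp [EE, Int.negOnePow_sub, Int.negOnePow_one]
      calc ka ^ (-(k : ℤ) - 1) * kb ^ p = ka ^ (-(k : ℤ)) * (ka⁻¹ * kb ^ p) := by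
            rw [zpow_sub_one, mul_assoc]
        _ = ka ^ (-(k : ℤ)) * kb ^ (-p) * ka⁻¹ := by rw [L1', ← mul_assoc]
        _ = kb ^ (EE (-(k : ℤ)) * (-p)) * ka ^ (-(k : ℤ)) * ka⁻¹ := by rw [ih]
        _ = kb ^ (EE (-(k : ℤ) - 1) * p) * ka ^ (-(k : ℤ) - 1) := by
            rw [h1, zpow_sub_one, mul_assoc]

/-! ### The homomorphism to the concrete model -/

def kleinF : Bool → KG := fun x => if x then ⟨0, 1⟩ else ⟨1, 0⟩

lemma kleinF_rels : ∀ r ∈ kleinRels, FreeGroup.lift kleinF r = 1 := by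
  intro r hr
  have : r = FreeGroup.of true * FreeGroup.of false * (FreeGroup.of true)⁻¹ * FreeGroup.of false :=
    hr
  subst this
  simp only [map_mul, map_inv, FreeGroup.lift_apply_of, kleinF]
  ext <;> simp [KG.mul_def, KG.inv_def, KG.one_def, EE_zero, EE_one, EE_neg]

def phiK : KleinGroup →* KG := PresentedGroup.toGroup kleinF_rels

lemma phiK_ka : phiK ka = ⟨0, 1⟩ := PresentedGroup.toGroup.of kleinF_rels

lemma phiK_kb : phiK kb = ⟨1, 0⟩ := PresentedGroup.toGroup.of kleinF_rels

lemma phiK_nf (p q : ℤ) : phiK (kb ^ p * ka ^ q) = ⟨p, q⟩ := by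
  rw [map_mul, map_zpow, map_zpow, phiK_ka, phiK_kb, KG.b_zpow, KG.a_zpow, KG.mul_def]
  ext <;> simp

/-! ### Normal form -/

lemma klein_nf (g : KleinGroup) : ∃ p q : ℤ, g = kb ^ p * ka ^ q := by
  induction g using PresentedGroup.induction_on with
  | H z =>
    induction z using FreeGroup.induction_on with
    | C1 => exact ⟨0, 0, by simp⟩
    | of x =>
        cases x
        · exact ⟨1, 0, by simp [kb]; rfl⟩
        · exact ⟨0, 1, by simp [ka]; rfl⟩
    | inv_of x _ =>
        cases x
        · exact ⟨-1, 0, by simp [kb]; rfl⟩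
        · exact ⟨0, -1, by simp [ka]; rfl⟩
    | mul x y hx hy =>
        obtain ⟨p, q, hx⟩ := hx
        obtain ⟨p', q', hy⟩ := hy
        refine ⟨p + EE q * p', q + q', ?_⟩
        rw [map_mul, hx, hy]
        calc kb ^ p * ka ^ q * (kb ^ p' * ka ^ q')
            = kb ^ p * (ka ^ q * kb ^ p') * ka ^ q' := by group
          _ = kb ^ p * (kb ^ (EE q * p') * ka ^ q) * ka ^ q' := by rw [L2]
          _ = kb ^ (p + EE q * p') * ka ^ (q + q') := by rw [zpow_add, zpow_add]; group

/-! ### Main theorem -/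

/-- In the Klein bottle group `π₁(K) = ⟨a, b | a b a⁻¹ b⟩`, the set
`R = {b^i a^j : 0 ≤ i < m, 0 ≤ j < n}` (`n` odd) is a complete system of representatives
for the left cosets of `H = ⟨a^n, b^m⟩`: every `g` can be written uniquely as `g = r·h`
with `r ∈ R`, `h ∈ H`.  Moreover the multiplication rules hold:
`b·(b^i a^j) = b^{i+1} a^j`, `b·(b^{m−1} a^j) = a^j b^{m(−1)^j}`, and for `0 < i < m`,
`a·(b^i a^j) = b^{m−i} a^{j+1} b^{m(−1)^j}`. -/
theorem klein_coset_representatives (m n : ℕ) (hm : 1 ≤ m) (hn : 1 ≤ n) (hodd : Odd n) :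
    (∀ g : KleinGroup,
      ∃! t : Fin m × Fin n × (Subgroup.closure {ka ^ n, kb ^ m} : Subgroup KleinGroup),
        g = kb ^ (t.1 : ℕ) * ka ^ (t.2.1 : ℕ) * (t.2.2 : KleinGroup))
    ∧ (∀ i j : ℕ, kb * (kb ^ i * ka ^ j) = kb ^ (i + 1) * ka ^ j)
    ∧ (∀ j : ℕ, kb * (kb ^ (m - 1) * ka ^ j) = ka ^ j * kb ^ ((m : ℤ) * (-1) ^ j))
    ∧ (∀ i j : ℕ, 0 < i → i < m →
        ka * (kb ^ i * ka ^ j) = kb ^ (m - i) * ka ^ (j + 1) * kb ^ ((m : ℤ) * (-1) ^ j)) := by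
  set H : Subgroup KleinGroup := Subgroup.closure {ka ^ n, kb ^ m} with hH
  have hmZ : (0 : ℤ) < (m : ℤ) := by exact_mod_cast hm
  have hnZ : (0 : ℤ) < (n : ℤ) := by exact_mod_cast hn
  -- images of H under phiK are "divisible" elements
  have hHdvd : ∀ h : KleinGroup, h ∈ H → (m : ℤ) ∣ (phiK h).p ∧ (n : ℤ) ∣ (phiK h).q := by
    have : H ≤ Subgroup.comap phiK
        { carrier := {x : KG | (m : ℤ) ∣ x.p ∧ (n : ℤ) ∣ x.q}
          one_mem' := by simp [KG.one_def]
          mul_mem' := by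
            rintro x y ⟨hx1, hx2⟩ ⟨hy1, hy2⟩
            exact ⟨by simpa [KG.mul_def] using dvd_add hx1 (Dvd.dvd.mul_left hy1 _),
              by simpa [KG.mul_def] using dvd_add hx2 hy2⟩
          inv_mem' := by
            rintro x ⟨hx1, hx2⟩
            exact ⟨by simpa [KG.inv_def] using (dvd_neg.2 (Dvd.dvd.mul_left hx1 _)),
              by simpa [KG.inv_def] using (dvd_neg.2 hx2)⟩ } := by
      rw [hH]
      apply Subgroup.closure_le _ |>.2
      rintro x (rfl | rfl)
      · have hval : phiK (ka ^ n) = ⟨0, (n : ℤ)⟩ := by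
          rw [map_pow, phiK_ka, ← zpow_natCast (⟨0,1⟩ : KG) n, KG.a_zpow]
        show (m : ℤ) ∣ (phiK (ka ^ n)).p ∧ (n : ℤ) ∣ (phiK (ka ^ n)).q
        rw [hval]; exact ⟨dvd_zero _, dvd_refl _⟩
      · have hval : phiK (kb ^ m) = ⟨(m : ℤ), 0⟩ := by
          rw [map_pow, phiK_kb, ← zpow_natCast (⟨1,0⟩ : KG) m, KG.b_zpow]
        show (m : ℤ) ∣ (phiK (kb ^ m)).p ∧ (n : ℤ) ∣ (phiK (kb ^ m)).q
        rw [hval]; exact ⟨dvd_refl _, dvd_zero _⟩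
    intro h hh
    exact this hh
  -- the product form determines everything
  have phiK_form : ∀ (i j : ℕ) (h : KleinGroup),
      phiK (kb ^ i * ka ^ j * h) = ⟨(i : ℤ) + EE j * (phiK h).p, (j : ℤ) + (phiK h).q⟩ := by
    intro i j h
    rw [map_mul]
    have : (kb ^ i * ka ^ j : KleinGroup) = kb ^ (i : ℤ) * ka ^ (j : ℤ) := by
      rw [zpow_natCast, zpow_natCast]
    rw [this, phiK_nf, KG.mul_def]
  have key : ∀ (i i' : Fin m) (j j' : Fin n) (h h' : H),
      kb ^ (i : ℕ) * ka ^ (j : ℕ) * (h : KleinGroup)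
        = kb ^ (i' : ℕ) * ka ^ (j' : ℕ) * (h' : KleinGroup) →
      i = i' ∧ j = j' ∧ h = h' := by
    intro i i' j j' h h' heq
    have hphi := congrArg phiK heq
    rw [phiK_form, phiK_form] at hphi
    obtain ⟨hd1, hd2⟩ := hHdvd h h.2
    obtain ⟨hd1', hd2'⟩ := hHdvd h' h'.2
    have e1 : (i : ℤ) + EE j * (phiK h).p = (i' : ℤ) + EE j' * (phiK h').p :=
      congrArg KG.p hphi
    have e2 : ((j : ℕ) : ℤ) + (phiK h).q = ((j' : ℕ) : ℤ) + (phiK h').q :=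
      congrArg KG.q hphi
    have hj : j = j' := by
      have hd : (n : ℤ) ∣ (((j : ℕ) : ℤ) - ((j' : ℕ) : ℤ)) := by
        have : (((j : ℕ) : ℤ) - ((j' : ℕ) : ℤ)) = (phiK h').q - (phiK h).q := by linarith
        rw [this]; exact dvd_sub hd2' hd2
      have habs : |(((j : ℕ) : ℤ) - ((j' : ℕ) : ℤ))| < n := by
        have b1 : ((j : ℕ) : ℤ) < n := by exact_mod_cast j.isLt
        have b2 : ((j' : ℕ) : ℤ) < n := by exact_mod_cast j'.isLt
        rw [abs_lt]; omega
      have := Int.eq_zero_of_abs_lt_dvd hd habs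
      have : ((j : ℕ) : ℤ) = ((j' : ℕ) : ℤ) := by omega
      exact Fin.ext (by exact_mod_cast this)
    subst hj
    have hi : i = i' := by
      have hd : (m : ℤ) ∣ (((i : ℕ) : ℤ) - ((i' : ℕ) : ℤ)) := by
        have : (((i : ℕ) : ℤ) - ((i' : ℕ) : ℤ))
            = EE j * (phiK h').p - EE j * (phiK h).p := by linarith
        rw [this]
        exact dvd_sub (Dvd.dvd.mul_left hd1' _) (Dvd.dvd.mul_left hd1 _)
      have habs : |(((i : ℕ) : ℤ) - ((i' : ℕ) : ℤ))| < m := by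
        have b1 : ((i : ℕ) : ℤ) < m := by exact_mod_cast i.isLt
        have b2 : ((i' : ℕ) : ℤ) < m := by exact_mod_cast i'.isLt
        rw [abs_lt]; omega
      have := Int.eq_zero_of_abs_lt_dvd hd habs
      have : ((i : ℕ) : ℤ) = ((i' : ℕ) : ℤ) := by omega
      exact Fin.ext (by exact_mod_cast this)
    subst hi
    refine ⟨rfl, rfl, ?_⟩
    have : (h : KleinGroup) = (h' : KleinGroup) :=
      mul_left_cancel (a := kb ^ (i : ℕ) * ka ^ (j : ℕ)) (by
        rw [mul_assoc] at heq ⊢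
        exact heq)
    exact Subtype.ext this
  refine ⟨?_, ?_, ?_, ?_⟩
  · -- existence and uniqueness
    intro g
    obtain ⟨p, q, hg⟩ := klein_nf g
    set s := p / (m : ℤ) with hs
    set t := q / (n : ℤ) with ht
    have hpm : (m : ℤ) * s + p % (m : ℤ) = p := Int.mul_ediv_add_emod p m
    have hqn : (n : ℤ) * t + q % (n : ℤ) = q := Int.mul_ediv_add_emod q n
    have hi0 : 0 ≤ p % (m : ℤ) := Int.emod_nonneg p (by positivity)
    have hj0 : 0 ≤ q % (n : ℤ) := Int.emod_nonneg q (by positivity)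
    have hilt : p % (m : ℤ) < m := Int.emod_lt_of_pos p hmZ
    have hjlt : q % (n : ℤ) < n := Int.emod_lt_of_pos q hnZ
    set i : ℕ := (p % (m : ℤ)).toNat with hi
    set j : ℕ := (q % (n : ℤ)).toNat with hj
    have hiZ : (i : ℤ) = p % (m : ℤ) := Int.toNat_of_nonneg hi0
    have hjZ : (j : ℤ) = q % (n : ℤ) := Int.toNat_of_nonneg hj0
    have hiltn : i < m := by omega
    have hjltn : j < n := by omega
    have hbH : (kb ^ m : KleinGroup) ∈ H := Subgroup.subset_closure (by simp)
    have haH : (ka ^ n : KleinGroup) ∈ H := Subgroup.subset_closure (by simp)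
    have hmemH : ((kb ^ m) ^ (EE j * s) * (ka ^ n) ^ t : KleinGroup) ∈ H :=
      mul_mem (Subgroup.zpow_mem H hbH _) (Subgroup.zpow_mem H haH _)
    have hE : EE (j : ℤ) * ((m : ℤ) * (EE j * s)) = (m : ℤ) * s := by
        have h2 : EE (j : ℤ) * EE (j : ℤ) = 1 := EE_mul_self _
        have : EE (j : ℤ) * ((m : ℤ) * (EE (j : ℤ) * s))
            = (EE (j : ℤ) * EE (j : ℤ)) * ((m : ℤ) * s) := by ring
        rw [this, h2, one_mul]
    have hgrep : g = kb ^ i * ka ^ j * ((kb ^ m) ^ (EE j * s) * (ka ^ n) ^ t) := by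
      symm
      calc kb ^ i * ka ^ j * ((kb ^ m) ^ (EE j * s) * (ka ^ n) ^ t)
          = kb ^ (i : ℤ) * ka ^ (j : ℤ)
            * (kb ^ ((m : ℤ) * (EE j * s)) * ka ^ ((n : ℤ) * t)) := by
            rw [← zpow_natCast kb i, ← zpow_natCast ka j, ← zpow_natCast kb m,
              ← zpow_natCast ka n, ← zpow_mul, ← zpow_mul]
        _ = kb ^ (i : ℤ) * (ka ^ (j : ℤ) * kb ^ ((m : ℤ) * (EE j * s))) * ka ^ ((n : ℤ) * t) := by
            group
        _ = kb ^ (i : ℤ) * (kb ^ (EE (j : ℤ) * ((m : ℤ) * (EE j * s))) * ka ^ (j : ℤ))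
            * ka ^ ((n : ℤ) * t) := by rw [L2]
        _ = kb ^ ((i : ℤ) + (m : ℤ) * s) * ka ^ ((j : ℤ) + (n : ℤ) * t) := by
            rw [hE, zpow_add, zpow_add]; group
        _ = kb ^ p * ka ^ q := by
            have e1 : (i : ℤ) + (m : ℤ) * s = p := by linarith [hpm, hiZ]
            have e2 : (j : ℤ) + (n : ℤ) * t = q := by linarith [hqn, hjZ]
            rw [e1, e2]
        _ = g := hg.symm
    refine ⟨(⟨i, hiltn⟩, ⟨j, hjltn⟩, ⟨_, hmemH⟩), hgrep, ?_⟩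
    rintro ⟨i', j', h'⟩ hy
    obtain ⟨h1, h2, h3⟩ := key i' ⟨i, hiltn⟩ j' ⟨j, hjltn⟩ h' ⟨_, hmemH⟩
      (hy.symm.trans hgrep)
    simp [h1, h2, h3]
  · -- rule for b, generic case
    intro i j
    rw [← mul_assoc, ← pow_succ']
  · -- rule for b, boundary case
    intro j
    have h3 : kb * kb ^ (m - 1) = kb ^ m := by rw [← pow_succ']; congr 1; omega
    rw [← mul_assoc, h3]
    have hE : EE (j : ℤ) * ((m : ℤ) * (-1) ^ j) = (m : ℤ) := by
      rw [EE_natCast]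
      have : (-1 : ℤ) ^ j * ((m : ℤ) * (-1) ^ j) = ((-1 : ℤ) * (-1)) ^ j * (m : ℤ) := by
        rw [mul_pow]; ring
      rw [this]; simp
    calc kb ^ m * ka ^ j = kb ^ ((m : ℕ) : ℤ) * ka ^ ((j : ℕ) : ℤ) := by
          rw [zpow_natCast, zpow_natCast]
      _ = kb ^ (EE (j : ℤ) * ((m : ℤ) * (-1) ^ j)) * ka ^ ((j : ℕ) : ℤ) := by rw [hE]
      _ = ka ^ ((j : ℕ) : ℤ) * kb ^ ((m : ℤ) * (-1) ^ j) := by rw [← L2]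
      _ = ka ^ j * kb ^ ((m : ℤ) * (-1) ^ j) := by rw [zpow_natCast]
  · -- rule for a
    intro i j h0 him
    have hE : EE ((j : ℤ) + 1) * ((m : ℤ) * (-1) ^ j) = -(m : ℤ) := by
      rw [EE_add, EE_one, EE_natCast]
      have : (-1 : ℤ) ^ j * -1 * ((m : ℤ) * (-1) ^ j)
          = -(((-1 : ℤ) * (-1)) ^ j * (m : ℤ)) := by rw [mul_pow]; ring
      rw [this]; simp
    have lhs : ka * (kb ^ i * ka ^ j) = kb ^ (-(i : ℤ)) * ka ^ (j + 1) := by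
      calc ka * (kb ^ i * ka ^ j) = (ka * kb ^ ((i : ℕ) : ℤ)) * ka ^ j := by
            rw [zpow_natCast, mul_assoc]
        _ = kb ^ (-(i : ℤ)) * ka * ka ^ j := by rw [L1]
        _ = kb ^ (-(i : ℤ)) * ka ^ (j + 1) := by rw [mul_assoc, ← pow_succ']
    have rhs : kb ^ (m - i) * ka ^ (j + 1) * kb ^ ((m : ℤ) * (-1) ^ j)
        = kb ^ (-(i : ℤ)) * ka ^ (j + 1) := by
      calc kb ^ (m - i) * ka ^ (j + 1) * kb ^ ((m : ℤ) * (-1) ^ j)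
          = kb ^ (((m - i : ℕ) : ℤ)) * (ka ^ (((j + 1 : ℕ) : ℤ)) * kb ^ ((m : ℤ) * (-1) ^ j)) := by
            rw [zpow_natCast, zpow_natCast, mul_assoc]
        _ = kb ^ (((m - i : ℕ) : ℤ))
            * (kb ^ (EE ((j : ℤ) + 1) * ((m : ℤ) * (-1) ^ j)) * ka ^ (((j + 1 : ℕ) : ℤ))) := by
            rw [L2]; push_cast; ring_nf
        _ = kb ^ (((m - i : ℕ) : ℤ) + -(m : ℤ)) * ka ^ (((j + 1 : ℕ) : ℤ)) := by
            rw [hE, ← mul_assoc, ← zpow_add]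
        _ = kb ^ (-(i : ℤ)) * ka ^ (j + 1) := by
            rw [zpow_natCast]
            congr 2
            omega
    rw [lhs, rhs]
end

section
/- Let p(z) ∈ ℂ[z, z^{−1}] be a Laurent polynomial such that p(iz) has real coefficients, with leading coefficient of argument λπ/2 (λ ∈ ℤ), whose only roots on the unit circle are i and −i with multiplicities m₊ and m₋ respectively, p pairs {iζ, i·conj(ζ)} of roots of modulus > 1 off the imaginary axis, r₊ roots on the positive imaginary axis of modulus > 1, and r₋ roots on the negative imaginary axis of modulus > 1 (all counted with multiplicity). Then, as n odd tends to infinity, Arg(∏_{z^n=1} p(z)) = ((λ + 2p + r₋ − r₊)n + (−1)^{(n−1)/2}(m₋ − m₊)/2)·(π/2) + o(1), the equality being in ℝ/2πℤ. -/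
open scoped Classical

open Complex Polynomial Filter

noncomputable def unz (w : ℂ) : ℂ := w / (‖w‖ : ℂ)

lemma unz_mul (a b : ℂ) : unz (a * b) = unz a * unz b := by
  simp [unz, map_mul, div_mul_div_comm]

lemma unz_one : unz 1 = 1 := by simp [unz]

lemma unz_pow (w : ℂ) (k : ℕ) : unz (w ^ k) = unz w ^ k := by
  simp [unz, map_pow, div_pow]

lemma unz_prod {ι : Type} (s : Finset ι) (g : ι → ℂ) :
    unz (∏ k ∈ s, g k) = ∏ k ∈ s, unz (g k) := by
  induction s using Finset.cons_induction with
  | empty => simp [unz_one]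
  | cons a s ha ih => rw [Finset.prod_cons, Finset.prod_cons, unz_mul, ih]

lemma unz_eq_exp_arg {w : ℂ} (hw : w ≠ 0) : Complex.exp (Complex.arg w * Complex.I) = unz w := by
  have h := Complex.norm_mul_exp_arg_mul_I w
  rw [unz, eq_div_iff (by exact_mod_cast (norm_ne_zero_iff.mpr hw)), mul_comm]
  exact h

lemma unz_pos {r : ℝ} (hr : 0 < r) : unz (r : ℂ) = 1 := by
  simp [unz, abs_of_pos hr, Complex.norm_of_nonneg hr.le, div_self, Complex.ofReal_ne_zero, hr.ne']

lemma unz_abs_one {w : ℂ} (hw : ‖w‖ = 1) : unz w = w := by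
  simp [unz, hw]

lemma abs_eq_im {z : ℂ} (h : z.re = 0) : ‖z‖ = |z.im| := by
  rw [Complex.norm_def, Complex.normSq_apply, h]
  rw [show (0:ℝ) * 0 + z.im * z.im = z.im ^ 2 by ring, Real.sqrt_sq_eq_abs]

lemma im_mul_I {z : ℂ} (h : z.re = 0) : z = (z.im : ℂ) * Complex.I := by
  conv_lhs => rw [← Complex.re_add_im z]
  rw [h]
  simp

lemma unz_neg_im_pos {z : ℂ} (h : z.re = 0) (h2 : 0 < z.im) : unz (-z) = -Complex.I := by
  have habs : ‖-z‖ = z.im := by rw [norm_neg, abs_eq_im h, abs_of_pos h2]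
  rw [unz, habs, im_mul_I h]
  simp only [Complex.mul_im, Complex.ofReal_re, Complex.ofReal_im, Complex.I_re, Complex.I_im,
    mul_one, mul_zero, zero_mul, add_zero]
  have : (z.im : ℂ) ≠ 0 := by exact_mod_cast h2.ne'
  field_simp

lemma unz_neg_im_neg {z : ℂ} (h : z.re = 0) (h2 : z.im < 0) : unz (-z) = Complex.I := by
  have habs : ‖-z‖ = -z.im := by rw [norm_neg, abs_eq_im h, abs_of_neg h2]
  rw [unz, habs, im_mul_I h]
  simp only [Complex.mul_im, Complex.ofReal_re, Complex.ofReal_im, Complex.I_re, Complex.I_im,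
    mul_one, mul_zero, zero_mul, add_zero]
  have : (z.im : ℂ) ≠ 0 := by exact_mod_cast h2.ne
  push_cast
  field_simp

lemma unz_neg_mul_conj {z : ℂ} (hz : z ≠ 0) : unz (-z) * unz ((starRingEnd ℂ) z) = -1 := by
  rw [← unz_mul]
  have : -z * (starRingEnd ℂ) z = -((Complex.normSq z : ℝ) : ℂ) := by
    rw [← Complex.mul_conj]; ring
  rw [this]
  have hpos : 0 < Complex.normSq z := Complex.normSq_pos.mpr hz
  rw [unz, norm_neg, Complex.norm_real, Real.norm_eq_abs, abs_of_pos hpos]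
  rw [div_eq_iff (by exact_mod_cast hpos.ne')]
  ring

lemma abs_one_sub_eps {ε : ℝ} (hε : ε = 1 ∨ ε = -1) :
    ‖1 - (ε:ℂ) * Complex.I‖ = Real.sqrt 2 := by
  rcases hε with rfl | rfl <;>
  · rw [Complex.norm_def, Complex.normSq_apply]
    simp
    norm_num

lemma unz_one_sub_eps {ε : ℝ} (hε : ε = 1 ∨ ε = -1) :
    unz (1 - (ε:ℂ) * Complex.I) = Complex.exp (((-ε * (Real.pi/4) : ℝ) : ℂ) * Complex.I) := by
  have hs2 : Real.sqrt 2 ≠ 0 := by positivity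
  have h22 : Real.sqrt 2 * Real.sqrt 2 = 2 := Real.mul_self_sqrt (by norm_num)
  have h22c : (Real.sqrt 2 : ℂ) * (Real.sqrt 2 : ℂ) = 2 := by exact_mod_cast h22
  have habs := abs_one_sub_eps hε
  rw [unz, habs, div_eq_iff (by exact_mod_cast hs2)]
  have hre : (Complex.exp (((-ε * (Real.pi/4) : ℝ) : ℂ) * Complex.I)).re
      = Real.cos (-ε * (Real.pi/4)) := Complex.exp_ofReal_mul_I_re _
  have him : (Complex.exp (((-ε * (Real.pi/4) : ℝ) : ℂ) * Complex.I)).im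
      = Real.sin (-ε * (Real.pi/4)) := Complex.exp_ofReal_mul_I_im _
  have hcos : Real.cos (-ε * (Real.pi/4)) = Real.sqrt 2 / 2 := by
    rcases hε with rfl | rfl <;>
      simp [Real.cos_pi_div_four]
  have hsin : Real.sin (-ε * (Real.pi/4)) = -ε * (Real.sqrt 2 / 2) := by
    rcases hε with rfl | rfl <;>
      simp [Real.sin_pi_div_four]
  rw [← Complex.re_add_im (Complex.exp (((-ε * (Real.pi/4) : ℝ) : ℂ) * Complex.I)),
    hre, him, hcos, hsin]
  push_cast
  linear_combination ((ε:ℂ) * Complex.I - 1) / 2 * h22c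

lemma I_pow_odd {n : ℕ} (hn : Odd n) :
    Complex.I ^ n = (((-1:ℝ) ^ ((n-1)/2) : ℝ) : ℂ) * Complex.I := by
  obtain ⟨j, rfl⟩ := hn
  have h1 : (2 * j + 1 - 1) / 2 = j := by omega
  rw [h1, pow_add, pow_mul, Complex.I_sq, pow_one]
  push_cast
  ring

lemma eps_pm (j : ℕ) : ((-1:ℝ) ^ j = 1 ∨ (-1:ℝ) ^ j = -1) := by
  rcases Nat.even_or_odd j with h | h
  · exact Or.inl h.neg_one_pow
  · exact Or.inr h.neg_one_pow

lemma exp_pi_div_two_mul_I : Complex.exp (((Real.pi/2 : ℝ) : ℂ) * Complex.I) = Complex.I := by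
  rw [Complex.exp_mul_I, ← Complex.ofReal_cos, ← Complex.ofReal_sin,
    Real.cos_pi_div_two, Real.sin_pi_div_two]
  simp

lemma card_nthRoots_complex (n : ℕ) :
    Multiset.card (Polynomial.nthRoots n (1 : ℂ)) = n := by
  rw [Polynomial.nthRoots]
  have hs : (X ^ n - C (1:ℂ)).Splits := IsAlgClosed.splits _
  rw [Polynomial.splits_iff_card_roots] at hs
  rw [hs, Polynomial.natDegree_X_pow_sub_C]

lemma prod_roots_sub {n : ℕ} (hn : Odd n) (μ : ℂ) :
    (((Polynomial.nthRoots n (1 : ℂ)).map (fun z => z - μ)).prod) = 1 - μ ^ n := by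
  have hn0 : n ≠ 0 := by rintro rfl; simp at hn
  have hmonic : (X ^ n - C (1:ℂ)).Monic := monic_X_pow_sub_C (1:ℂ) hn0
  have hs : (X ^ n - C (1:ℂ)).Splits := IsAlgClosed.splits _
  have h := hs.eval_eq_prod_roots_of_monic hmonic μ
  have hroots : (X ^ n - C (1:ℂ)).roots = Polynomial.nthRoots n (1:ℂ) := rfl
  rw [hroots] at h
  simp only [Polynomial.eval_sub, Polynomial.eval_pow, Polynomial.eval_X, Polynomial.eval_C] at h
  have h2 : ((Polynomial.nthRoots n (1 : ℂ)).map (fun z => z - μ)).prod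
      = ((Polynomial.nthRoots n (1 : ℂ)).map (fun z => (-1) * (μ - z))).prod := by
    congr 1; apply Multiset.map_congr rfl; intro z _; ring
  rw [h2]
  have hmm : ((Polynomial.nthRoots n (1 : ℂ)).map (fun z => (-1) * (μ - z))).prod
      = ((Polynomial.nthRoots n (1 : ℂ)).map (fun _ => (-1 : ℂ))).prod
        * ((Polynomial.nthRoots n (1 : ℂ)).map (fun z => μ - z)).prod :=
    Multiset.prod_map_mul
  rw [hmm, ← h, Multiset.map_const', Multiset.prod_replicate,
    card_nthRoots_complex n, hn.neg_one_pow]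
  ring

lemma mult_prod_swap {α β M : Type*} [CommMonoid M] (s : Multiset α) (t : Finset β) (f : β → α → M) :
    (s.map (fun a => ∏ b ∈ t, f b a)).prod = ∏ b ∈ t, (s.map (f b)).prod := by
  induction s using Multiset.induction with
  | empty => simp
  | cons a s ih => simp [ih, Finset.prod_mul_distrib]

lemma full_prod_eq {n : ℕ} (hn : Odd n)
    {ι : Type} [Fintype ι] (c : ℝ) (d lam : ℤ) (μ : ι → ℂ) (m : ι → ℕ) :
    ((Polynomial.nthRoots n (1 : ℂ)).map
        (fun z => (c : ℂ) * Complex.I ^ lam * z ^ d * ∏ k : ι, (z - μ k) ^ (m k))).prod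
      = ((c:ℂ) * Complex.I ^ lam) ^ n * ∏ k : ι, (1 - μ k ^ n) ^ (m k) := by
  have hn0 : n ≠ 0 := by rintro rfl; simp at hn
  set s := Polynomial.nthRoots n (1 : ℂ) with hs
  have h1 : (s.map (fun z => (c : ℂ) * Complex.I ^ lam * z ^ d * ∏ k : ι, (z - μ k) ^ (m k))).prod
      = (s.map (fun _ => (c : ℂ) * Complex.I ^ lam)).prod * (s.map (fun z => z ^ d)).prod
        * (s.map (fun z => ∏ k : ι, (z - μ k) ^ (m k))).prod := by
    rw [← Multiset.prod_map_mul, ← Multiset.prod_map_mul]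
  rw [h1]
  have h2 : (s.map (fun _ => (c : ℂ) * Complex.I ^ lam)).prod = ((c:ℂ) * Complex.I ^ lam) ^ n := by
    rw [Multiset.map_const', Multiset.prod_replicate, card_nthRoots_complex]
  have h3 : (s.map (fun z => z ^ d)).prod = 1 := by
    have ha : (s.map (fun z => z ^ d)).prod = ((s.map (fun z => z)).prod) ^ d :=
      Multiset.prod_map_zpow
    rw [ha]
    have hb : (s.map (fun z => z)).prod = 1 := by
      have := prod_roots_sub hn 0
      simpa [zero_pow hn0] using this
    rw [hb, one_zpow]
  have h4 : (s.map (fun z => ∏ k : ι, (z - μ k) ^ (m k))).prod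
      = ∏ k : ι, (1 - μ k ^ n) ^ (m k) := by
    rw [mult_prod_swap]
    refine Finset.prod_congr rfl (fun k _ => ?_)
    rw [Multiset.prod_map_pow, prod_roots_sub hn]
  rw [h2, h3, h4, mul_one]

lemma prod_sym {ι : Type} [Fintype ι] (μ : ι → ℂ) (m : ι → ℕ)
    (hsym : ∀ z : ℂ,
      (∑ k ∈ Finset.univ.filter (fun k => μ k = z), m k)
        = ∑ k ∈ Finset.univ.filter (fun k => μ k = -((starRingEnd ℂ) z)), m k)
    (G : ℂ → ℂ) :
    ∏ k, G (μ k) ^ m k = ∏ k, G (-((starRingEnd ℂ) (μ k))) ^ m k := by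
  set σ : ℂ → ℂ := fun z => -((starRingEnd ℂ) z) with hσ
  have hσσ : ∀ z, σ (σ z) = z := by intro z; simp [hσ]
  set M : ℂ → ℕ := fun z => ∑ k ∈ Finset.univ.filter (fun k => μ k = z), m k with hM
  have hMσ : ∀ z, M z = M (σ z) := fun z => hsym z
  set V : Finset ℂ := Finset.univ.image μ with hV
  set W : Finset ℂ := V ∪ V.image σ with hW
  have hσW : ∀ z ∈ W, σ z ∈ W := by
    intro z hz
    rw [hW, Finset.mem_union] at hz ⊢
    rcases hz with h | h
    · exact Or.inr (Finset.mem_image_of_mem σ h)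
    · rcases Finset.mem_image.mp h with ⟨y, hy, rfl⟩
      exact Or.inl (by rwa [hσσ])
  have step1 : ∀ H : ℂ → ℂ, ∏ k, H (μ k) ^ m k = ∏ z ∈ W, H z ^ M z := by
    intro H
    rw [← Finset.prod_fiberwise_of_maps_to (t := W) (g := μ)
      (fun k _ => by exact Finset.mem_union_left _ (Finset.mem_image_of_mem μ (Finset.mem_univ k)))
      (fun k => H (μ k) ^ m k)]
    refine Finset.prod_congr rfl (fun z _ => ?_)
    rw [hM]
    rw [← Finset.prod_pow_eq_pow_sum]
    refine Finset.prod_congr rfl (fun k hk => ?_)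
    rw [Finset.mem_filter] at hk
    rw [hk.2]
  have step2 : ∏ z ∈ W, G z ^ M z = ∏ z ∈ W, G (σ z) ^ M (σ z) := by
    refine Finset.prod_nbij' σ σ ?_ ?_ ?_ ?_ ?_
    · exact fun z hz => hσW z hz
    · exact fun z hz => hσW z hz
    · exact fun z _ => hσσ z
    · exact fun z _ => hσσ z
    · exact fun z _ => by rw [hσσ]
  rw [step1 G, step1 (fun z => G (σ z)), step2]
  exact Finset.prod_congr rfl (fun z _ => by rw [← hMσ])

lemma ite_pow_prod {ι : Type} [Fintype ι] (m : ι → ℕ) (p : ι → Prop) [DecidablePred p] (c : ℂ) :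
    (∏ k, (if p k then c else 1) ^ m k) = c ^ (∑ k ∈ Finset.univ.filter p, m k) := by
  rw [← Finset.prod_pow_eq_pow_sum, Finset.prod_filter]
  exact Finset.prod_congr rfl (fun k _ => by split <;> simp)

lemma B_eval {ι : Type} [Fintype ι] (μ : ι → ℂ) (m : ι → ℕ)
    (hsym : ∀ z : ℂ,
      (∑ k ∈ Finset.univ.filter (fun k => μ k = z), m k)
        = ∑ k ∈ Finset.univ.filter (fun k => μ k = -((starRingEnd ℂ) z)), m k)
    (P rplus rminus : ℕ)
    (hP : P = ∑ k ∈ Finset.univ.filter (fun k => 1 < ‖μ k‖ ∧ 0 < (μ k).re), m k)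
    (hrplus : rplus = ∑ k ∈ Finset.univ.filter (fun k => (μ k).re = 0 ∧ 1 < (μ k).im), m k)
    (hrminus : rminus = ∑ k ∈ Finset.univ.filter (fun k => (μ k).re = 0 ∧ (μ k).im < -1), m k) :
    ∏ k, (if 1 < ‖μ k‖ then unz (-(μ k)) else 1) ^ m k
      = Complex.I ^ (2 * (P:ℤ) + (rminus:ℤ) - (rplus:ℤ)) := by
  have habs_im : ∀ z : ℂ, z.re = 0 → (1 < z.im ∨ z.im < -1) → 1 < ‖z‖ := by
    intro z h h2
    have := Complex.abs_im_le_norm z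
    rcases h2 with h2 | h2
    · calc (1:ℝ) < z.im := h2
        _ ≤ |z.im| := le_abs_self _
        _ ≤ ‖z‖ := this
    · calc (1:ℝ) < -z.im := by linarith
        _ ≤ |z.im| := neg_le_abs _
        _ ≤ ‖z‖ := this
  have hpoint : ∀ z : ℂ, (if 1 < ‖z‖ then unz (-z) else 1)
      = (if 1 < ‖z‖ ∧ 0 < z.re then unz (-z) else 1)
        * (if 1 < ‖z‖ ∧ z.re < 0 then unz (-z) else 1)
        * (if z.re = 0 ∧ 1 < z.im then unz (-z) else 1)
        * (if z.re = 0 ∧ z.im < -1 then unz (-z) else 1) := by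
    intro z
    by_cases h1 : 1 < ‖z‖
    · rw [if_pos h1]
      rcases lt_trichotomy z.re 0 with hre | hre | hre
      · rw [if_neg (by rintro ⟨_, h⟩; linarith), if_pos ⟨h1, hre⟩,
          if_neg (by rintro ⟨h, _⟩; linarith), if_neg (by rintro ⟨h, _⟩; linarith)]
        ring
      · have him : 1 < |z.im| := by rw [← abs_eq_im hre]; exact h1
        rw [if_neg (by rintro ⟨_, h⟩; linarith), if_neg (by rintro ⟨_, h⟩; linarith)]
        rcases abs_cases z.im with ⟨he, _⟩ | ⟨he, _⟩
        · rw [if_pos ⟨hre, by linarith⟩, if_neg (by rintro ⟨_, h⟩; linarith)]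
          ring
        · rw [if_neg (by rintro ⟨_, h⟩; linarith), if_pos ⟨hre, by linarith⟩]
          ring
      · rw [if_pos ⟨h1, hre⟩, if_neg (by rintro ⟨_, h⟩; linarith),
          if_neg (by rintro ⟨h, _⟩; linarith), if_neg (by rintro ⟨h, _⟩; linarith)]
        ring
    · rw [if_neg h1, if_neg (by rintro ⟨h, _⟩; exact h1 h), if_neg (by rintro ⟨h, _⟩; exact h1 h),
        if_neg (fun h => h1 (habs_im z h.1 (Or.inl h.2))),
        if_neg (fun h => h1 (habs_im z h.1 (Or.inr h.2)))]
      ring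
  calc ∏ k, (if 1 < ‖μ k‖ then unz (-(μ k)) else 1) ^ m k
      = ∏ k, ((if 1 < ‖μ k‖ ∧ 0 < (μ k).re then unz (-(μ k)) else 1) ^ m k
          * (if 1 < ‖μ k‖ ∧ (μ k).re < 0 then unz (-(μ k)) else 1) ^ m k
          * (if (μ k).re = 0 ∧ 1 < (μ k).im then unz (-(μ k)) else 1) ^ m k
          * (if (μ k).re = 0 ∧ (μ k).im < -1 then unz (-(μ k)) else 1) ^ m k) := by
        refine Finset.prod_congr rfl (fun k _ => ?_)
        rw [hpoint (μ k)]
        ring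
    _ = (∏ k, (if 1 < ‖μ k‖ ∧ 0 < (μ k).re then unz (-(μ k)) else 1) ^ m k)
        * (∏ k, (if 1 < ‖μ k‖ ∧ (μ k).re < 0 then unz (-(μ k)) else 1) ^ m k)
        * (∏ k, (if (μ k).re = 0 ∧ 1 < (μ k).im then unz (-(μ k)) else 1) ^ m k)
        * (∏ k, (if (μ k).re = 0 ∧ (μ k).im < -1 then unz (-(μ k)) else 1) ^ m k) := by
        rw [Finset.prod_mul_distrib, Finset.prod_mul_distrib, Finset.prod_mul_distrib]
    _ = Complex.I ^ (2 * (P:ℤ) + (rminus:ℤ) - (rplus:ℤ)) := by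
        have hGmsym : (∏ k, (if 1 < ‖μ k‖ ∧ (μ k).re < 0 then unz (-(μ k)) else 1) ^ m k)
            = ∏ k, (if 1 < ‖μ k‖ ∧ 0 < (μ k).re then unz ((starRingEnd ℂ) (μ k)) else 1) ^ m k := by
          rw [prod_sym μ m hsym (fun z => if 1 < ‖z‖ ∧ z.re < 0 then unz (-z) else 1)]
          refine Finset.prod_congr rfl (fun k _ => ?_)
          congr 1
          simp only [norm_neg, Complex.norm_conj, Complex.neg_re, Complex.conj_re, neg_neg]
          exact if_congr (by constructor <;> (rintro ⟨a, b⟩; exact ⟨a, by linarith⟩)) rfl rfl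
        have hPm : (∏ k, (if 1 < ‖μ k‖ ∧ 0 < (μ k).re then unz (-(μ k)) else 1) ^ m k)
            * (∏ k, (if 1 < ‖μ k‖ ∧ (μ k).re < 0 then unz (-(μ k)) else 1) ^ m k)
            = (-1 : ℂ) ^ P := by
          rw [hGmsym, ← Finset.prod_mul_distrib]
          have heach : ∀ k : ι, (if 1 < ‖μ k‖ ∧ 0 < (μ k).re then unz (-(μ k)) else 1) ^ m k
              * (if 1 < ‖μ k‖ ∧ 0 < (μ k).re then unz ((starRingEnd ℂ) (μ k)) else 1) ^ m k
              = (if 1 < ‖μ k‖ ∧ 0 < (μ k).re then (-1:ℂ) else 1) ^ m k := by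
            intro k
            rw [← mul_pow]
            congr 1
            by_cases h : 1 < ‖μ k‖ ∧ 0 < (μ k).re
            · rw [if_pos h, if_pos h, if_pos h]
              refine unz_neg_mul_conj (fun h0 => ?_)
              rw [h0] at h
              simp at h
            · rw [if_neg h, if_neg h, if_neg h, one_mul]
          rw [Finset.prod_congr rfl (fun k _ => heach k), ite_pow_prod, hP]
        have hIp : (∏ k, (if (μ k).re = 0 ∧ 1 < (μ k).im then unz (-(μ k)) else 1) ^ m k)
            = (-Complex.I) ^ rplus := by
          have heach : ∀ k : ι, (if (μ k).re = 0 ∧ 1 < (μ k).im then unz (-(μ k)) else 1)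
              = (if (μ k).re = 0 ∧ 1 < (μ k).im then (-Complex.I) else 1) := by
            intro k
            by_cases h : (μ k).re = 0 ∧ 1 < (μ k).im
            · rw [if_pos h, if_pos h, unz_neg_im_pos h.1 (by linarith [h.2])]
            · rw [if_neg h, if_neg h]
          simp only [heach]
          rw [ite_pow_prod, hrplus]
        have hIm : (∏ k, (if (μ k).re = 0 ∧ (μ k).im < -1 then unz (-(μ k)) else 1) ^ m k)
            = Complex.I ^ rminus := by
          have heach : ∀ k : ι, (if (μ k).re = 0 ∧ (μ k).im < -1 then unz (-(μ k)) else 1)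
              = (if (μ k).re = 0 ∧ (μ k).im < -1 then Complex.I else 1) := by
            intro k
            by_cases h : (μ k).re = 0 ∧ (μ k).im < -1
            · rw [if_pos h, if_pos h, unz_neg_im_neg h.1 (by linarith [h.2])]
            · rw [if_neg h, if_neg h]
          simp only [heach]
          rw [ite_pow_prod, hrminus]
        rw [hPm, hIp, hIm]
        have h1 : (-1 : ℂ) = Complex.I ^ (2:ℕ) := by rw [Complex.I_sq]
        have h2 : (-Complex.I) = Complex.I ^ (3:ℕ) := by rw [pow_succ, Complex.I_sq]; ring
        rw [h1, h2, ← pow_mul, ← pow_mul, ← pow_add, ← pow_add]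
        rw [← zpow_natCast Complex.I (2 * P + 3 * rplus + rminus)]
        rw [show ((2 * P + 3 * rplus + rminus : ℕ) : ℤ)
            = (2 * (P:ℤ) + (rminus:ℤ) - (rplus:ℤ)) + 4 * rplus by push_cast; ring]
        rw [zpow_add₀ Complex.I_ne_zero]
        have h4 : Complex.I ^ ((4:ℤ) * rplus) = 1 := by
          rw [zpow_mul]
          have hI4 : Complex.I ^ (4:ℤ) = 1 := by
            rw [show ((4:ℤ)) = ((4:ℕ):ℤ) by norm_num, zpow_natCast]
            rw [show (4:ℕ) = 2*2 by norm_num, pow_mul, Complex.I_sq]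
            ring
          rw [hI4, one_zpow]
        rw [h4, mul_one]

lemma factor_decomp {n : ℕ} (hn : Odd n) (z : ℂ) (mm : ℕ)
    (hcircz : ‖z‖ = 1 → z = Complex.I ∨ z = -Complex.I) :
    unz (1 - z ^ n) ^ mm =
      ((if 1 < ‖z‖ then unz (-z) else 1) ^ (n * mm)
        * (if z = Complex.I then
            Complex.exp (((-((-1:ℝ)^((n-1)/2)) * (Real.pi/4) : ℝ) : ℂ) * Complex.I) else 1) ^ mm
        * (if z = -Complex.I then
            Complex.exp ((((-1:ℝ)^((n-1)/2) * (Real.pi/4) : ℝ) : ℂ) * Complex.I) else 1) ^ mm)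
      * (if ‖z‖ < 1 then unz (1 - z ^ n) ^ mm
          else if 1 < ‖z‖ then unz (1 - z⁻¹ ^ n) ^ mm else 1) := by
  have hInI : Complex.I ≠ -Complex.I := by
    intro h
    have h2 := congrArg Complex.im h
    simp at h2
    norm_num at h2
  rcases lt_trichotomy (‖z‖) 1 with habs | habs | habs
  · have hc1 : ¬ (1:ℝ) < ‖z‖ := by linarith
    have hcI : z ≠ Complex.I := by intro h; rw [h] at habs; simp at habs
    have hcmI : z ≠ -Complex.I := by intro h; rw [h] at habs; simp at habs
    rw [if_neg hc1, if_neg hcI, if_neg hcmI, if_pos habs]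
    simp
  · rcases hcircz habs with rfl | rfl
    · have hc1 : ¬ (1:ℝ) < ‖Complex.I‖ := by simp
      have hlt : ¬ ‖Complex.I‖ < 1 := by simp
      rw [if_neg hc1, if_pos rfl, if_neg hInI, if_neg hlt, if_neg hc1]
      rw [I_pow_odd hn, unz_one_sub_eps (eps_pm _)]
      simp
    · have hc1 : ¬ (1:ℝ) < ‖-Complex.I‖ := by simp
      have hlt : ¬ ‖-Complex.I‖ < 1 := by simp
      have hne : (-Complex.I : ℂ) ≠ Complex.I := fun h => hInI h.symm
      rw [if_neg hc1, if_neg hne, if_pos rfl, if_neg hlt, if_neg hc1]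
      have h1 : (-Complex.I) ^ n = -((((-1:ℝ) ^ ((n-1)/2) : ℝ) : ℂ) * Complex.I) := by
        rw [Odd.neg_pow hn, I_pow_odd hn]
      have h2 : (1 : ℂ) - -((((-1:ℝ) ^ ((n-1)/2) : ℝ) : ℂ) * Complex.I)
          = 1 - ((-((-1:ℝ) ^ ((n-1)/2)) : ℝ) : ℂ) * Complex.I := by push_cast; ring
      rw [h1, h2, unz_one_sub_eps (by rcases eps_pm ((n-1)/2) with h | h <;> simp [h])]
      rw [show ((- -((-1:ℝ)^((n-1)/2)) * (Real.pi/4) : ℝ) : ℂ)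
          = ((((-1:ℝ)^((n-1)/2)) * (Real.pi/4) : ℝ) : ℂ) by push_cast; ring]
      simp
  · have hcI : z ≠ Complex.I := by intro h; rw [h] at habs; simp at habs
    have hcmI : z ≠ -Complex.I := by intro h; rw [h] at habs; simp at habs
    have hlt : ¬ ‖z‖ < 1 := by linarith
    rw [if_pos habs, if_neg hcI, if_neg hcmI, if_neg hlt, if_pos habs]
    have hz0 : z ≠ 0 := by intro h; rw [h] at habs; simp at habs; norm_num at habs
    have hinv : (z⁻¹) ^ n * z ^ n = 1 := by
      rw [← mul_pow, inv_mul_cancel₀ hz0, one_pow]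
    have hkey : (1 : ℂ) - z ^ n = (-z) ^ n * (1 - (z⁻¹) ^ n) := by
      rw [Odd.neg_pow hn]
      linear_combination -hinv
    rw [hkey, unz_mul, unz_pow, mul_pow, ← pow_mul]
    ring


/-- Let `p(z) = c·i^λ·z^d·∏_k (z − μ_k)^{m_k}` (`c > 0`) be a Laurent
polynomial such that `p(iz)` has real coefficients (encoded by the root symmetry `hsym`),
whose only roots on the unit circle are `±i` (multiplicities `mplus, mminus`), with `P` pairs
`{iζ, i·conj ζ}` of roots of modulus `> 1` off the imaginary axis, and `rplus` (resp. `rminus`)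
roots on the positive (resp. negative) imaginary axis of modulus `> 1`.  Then, as `n` odd
tends to infinity,
`Arg(∏_{z^n=1} p(z)) = ((λ + 2P + rminus − rplus)n + (−1)^{(n−1)/2}(mminus − mplus)/2)·(π/2) + o(1)`
in `ℝ/2πℤ` (expressed via convergence of the corresponding points on the unit circle). -/
theorem arg_product_over_roots_of_unity_asymptotics
    {ι : Type} [Fintype ι] (c : ℝ) (hc : 0 < c) (d lam : ℤ) (μ : ι → ℂ) (m : ι → ℕ)
    (hcirc : ∀ k, ‖μ k‖ = 1 → μ k = Complex.I ∨ μ k = -Complex.I)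
    (hsym : ∀ z : ℂ,
      (∑ k ∈ Finset.univ.filter (fun k => μ k = z), m k)
        = ∑ k ∈ Finset.univ.filter (fun k => μ k = -((starRingEnd ℂ) z)), m k)
    (P rplus rminus mplus mminus : ℕ)
    (hP : P = ∑ k ∈ Finset.univ.filter (fun k => 1 < ‖μ k‖ ∧ 0 < (μ k).re), m k)
    (hrplus : rplus = ∑ k ∈ Finset.univ.filter (fun k => (μ k).re = 0 ∧ 1 < (μ k).im), m k)
    (hrminus : rminus = ∑ k ∈ Finset.univ.filter (fun k => (μ k).re = 0 ∧ (μ k).im < -1), m k)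
    (hmplus : mplus = ∑ k ∈ Finset.univ.filter (fun k => μ k = Complex.I), m k)
    (hmminus : mminus = ∑ k ∈ Finset.univ.filter (fun k => μ k = -Complex.I), m k) :
    Filter.Tendsto
      (fun n : ℕ =>
        norm
          (Complex.exp
              ((Complex.arg (((Polynomial.nthRoots n (1 : ℂ)).map
                  (fun z => (c : ℂ) * Complex.I ^ lam * z ^ d
                    * ∏ k : ι, (z - μ k) ^ (m k))).prod) : ℂ) * Complex.I)
            - Complex.exp
              (((((lam + 2 * (P : ℤ) + (rminus : ℤ) - (rplus : ℤ)) * (n : ℤ) : ℤ) : ℝ)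
                  + (-1 : ℝ) ^ ((n - 1) / 2) * ((mminus : ℝ) - (mplus : ℝ)) / 2)
                * (Real.pi / 2) * Complex.I)))
      (Filter.atTop ⊓ Filter.principal {n : ℕ | Odd n}) (nhds 0) := by
    classical
  set err : ι → ℕ → ℂ := fun k n =>
    if ‖μ k‖ < 1 then unz (1 - μ k ^ n) ^ m k
    else if 1 < ‖μ k‖ then unz (1 - (μ k)⁻¹ ^ n) ^ m k else 1 with herr
  set D : ℕ → ℂ := fun n => ∏ k, err k n with hD
  -- the error terms tend to 1
  have hDt : Filter.Tendsto D Filter.atTop (nhds 1) := by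
    have h1 : Filter.Tendsto (fun n : ℕ => ∏ k : ι, err k n) Filter.atTop
        (nhds (∏ _k : ι, (1:ℂ))) := by
      apply tendsto_finset_prod
      intro k _
      have hgen : ∀ w : ℂ, ‖w‖ < 1 →
          Filter.Tendsto (fun n : ℕ => unz (1 - w ^ n) ^ m k) Filter.atTop (nhds 1) := by
        intro w hw
        have hz : Filter.Tendsto (fun n : ℕ => w ^ n) Filter.atTop (nhds 0) :=
          tendsto_pow_atTop_nhds_zero_of_norm_lt_one (by exact hw)
        have h1s : Filter.Tendsto (fun n : ℕ => 1 - w ^ n) Filter.atTop (nhds 1) := by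
          have := (tendsto_const_nhds (x := (1:ℂ)) (f := Filter.atTop (α := ℕ))).sub hz
          simpa using this
        have habs : Filter.Tendsto (fun n : ℕ => ((‖1 - w ^ n‖ : ℝ) : ℂ))
            Filter.atTop (nhds 1) := by
          have h2 : Filter.Tendsto (fun n : ℕ => ‖1 - w ^ n‖) Filter.atTop
              (nhds 1) := by
            have := (continuous_norm.tendsto 1).comp h1s
            simpa [Function.comp_def] using this
          have := (Complex.continuous_ofReal.tendsto 1).comp h2
          simpa [Function.comp_def] using this
        have hu : Filter.Tendsto (fun n : ℕ => unz (1 - w ^ n)) Filter.atTop (nhds 1) := by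
          have := h1s.div habs one_ne_zero
          rw [div_one] at this
          exact this
        have := hu.pow (m k)
        simpa using this
      by_cases h : ‖μ k‖ < 1
      · simp only [herr, if_pos h]
        exact hgen (μ k) h
      · by_cases h2 : 1 < ‖μ k‖
        · simp only [herr, if_neg h, if_pos h2]
          refine hgen (μ k)⁻¹ ?_
          rw [norm_inv]
          rw [inv_lt_one_iff₀]
          right; exact h2
        · simp only [herr, if_neg h, if_neg h2]
          exact tendsto_const_nhds
    simpa using h1
  -- main identity for odd n
  have key : ∀ n : ℕ, Odd n →
      ‖
          Complex.exp
              ((Complex.arg (((Polynomial.nthRoots n (1 : ℂ)).map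
                  (fun z => (c : ℂ) * Complex.I ^ lam * z ^ d
                    * ∏ k : ι, (z - μ k) ^ (m k))).prod) : ℂ) * Complex.I)
            - Complex.exp
              (((((lam + 2 * (P : ℤ) + (rminus : ℤ) - (rplus : ℤ)) * (n : ℤ) : ℤ) : ℝ)
                  + (-1 : ℝ) ^ ((n - 1) / 2) * ((mminus : ℝ) - (mplus : ℝ)) / 2)
                * (Real.pi / 2) * Complex.I)‖
        = ‖D n - 1‖ := by
    intro n hn
    have hn0 : n ≠ 0 := by rintro rfl; simp at hn
    have hεpm := eps_pm ((n-1)/2)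
    have hprod := full_prod_eq hn c d lam μ m
    have hne1 : ∀ k : ι, (1:ℂ) - μ k ^ n ≠ 0 := by
      intro k
      rw [sub_ne_zero]
      intro h
      rcases lt_trichotomy (‖μ k‖) 1 with hab | hab | hab
      · have hlt : ‖μ k ^ n‖ < 1 := by
          rw [norm_pow]; exact pow_lt_one₀ (norm_nonneg _) hab hn0
        rw [← h] at hlt; simp at hlt
      · have hC : ((-1:ℂ)) ^ ((n-1)/2) = 1 ∨ ((-1:ℂ)) ^ ((n-1)/2) = -1 := by
          rcases Nat.even_or_odd ((n-1)/2) with h2 | h2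
          · exact Or.inl h2.neg_one_pow
          · exact Or.inr h2.neg_one_pow
        rcases hcirc k hab with he | he
        · rw [he, I_pow_odd hn] at h
          have him := congrArg Complex.im h
          simp at him
          rcases hC with h2 | h2 <;> rw [h2] at him <;>
            simp [Complex.one_re, Complex.neg_re] at him
        · rw [he, Odd.neg_pow hn, I_pow_odd hn] at h
          have him := congrArg Complex.im h
          simp at him
          rcases hC with h2 | h2 <;> rw [h2] at him <;>
            simp [Complex.one_re, Complex.neg_re] at him
      · have hlt : 1 < ‖μ k ^ n‖ := by
          rw [norm_pow]; exact one_lt_pow₀ hab hn0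
        rw [← h] at hlt; simp at hlt
    have hcl : (c:ℂ) * Complex.I ^ lam ≠ 0 :=
      mul_ne_zero (by exact_mod_cast hc.ne') (zpow_ne_zero _ Complex.I_ne_zero)
    have hPne : (((Polynomial.nthRoots n (1 : ℂ)).map
        (fun z => (c : ℂ) * Complex.I ^ lam * z ^ d
          * ∏ k : ι, (z - μ k) ^ (m k))).prod) ≠ 0 := by
      rw [hprod]
      exact mul_ne_zero (pow_ne_zero _ hcl)
        (Finset.prod_ne_zero_iff.mpr (fun k _ => pow_ne_zero _ (hne1 k)))
    have hIl : ‖Complex.I ^ lam‖ = 1 := by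
      rw [norm_zpow, Complex.norm_I, one_zpow]
    -- compute unz of the product
    have hexp : Complex.exp
        ((Complex.arg (((Polynomial.nthRoots n (1 : ℂ)).map
            (fun z => (c : ℂ) * Complex.I ^ lam * z ^ d
              * ∏ k : ι, (z - μ k) ^ (m k))).prod) : ℂ) * Complex.I)
        = Complex.exp
              (((((lam + 2 * (P : ℤ) + (rminus : ℤ) - (rplus : ℤ)) * (n : ℤ) : ℤ) : ℝ)
                  + (-1 : ℝ) ^ ((n - 1) / 2) * ((mminus : ℝ) - (mplus : ℝ)) / 2)
                * (Real.pi / 2) * Complex.I) * D n := by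
      rw [unz_eq_exp_arg hPne, hprod, unz_mul, unz_pow, unz_mul, unz_pos hc, one_mul,
        unz_abs_one hIl, unz_prod]
      have hterm : ∀ k : ι, unz ((1 - μ k ^ n) ^ m k)
          = ((if 1 < ‖μ k‖ then unz (-(μ k)) else 1) ^ (n * m k)
            * (if μ k = Complex.I then
                Complex.exp (((-((-1:ℝ)^((n-1)/2)) * (Real.pi/4) : ℝ) : ℂ) * Complex.I) else 1) ^ m k
            * (if μ k = -Complex.I then
                Complex.exp ((((-1:ℝ)^((n-1)/2) * (Real.pi/4) : ℝ) : ℂ) * Complex.I) else 1) ^ m k)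
          * err k n := by
        intro k
        rw [unz_pow, herr]
        exact factor_decomp hn (μ k) (m k) (hcirc k)
      rw [Finset.prod_congr rfl (fun k _ => hterm k)]
      rw [Finset.prod_mul_distrib, Finset.prod_mul_distrib, Finset.prod_mul_distrib]
      have hpre1 : (∏ k, (if 1 < ‖μ k‖ then unz (-(μ k)) else 1) ^ (n * m k))
          = (Complex.I ^ (2 * (P:ℤ) + (rminus:ℤ) - (rplus:ℤ))) ^ n := by
        have heach : ∀ k : ι, (if 1 < ‖μ k‖ then unz (-(μ k)) else 1) ^ (n * m k)
            = ((if 1 < ‖μ k‖ then unz (-(μ k)) else 1) ^ m k) ^ n := by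
          intro k
          rw [mul_comm n (m k), pow_mul]
        rw [Finset.prod_congr rfl (fun k _ => heach k), Finset.prod_pow,
          B_eval μ m hsym P rplus rminus hP hrplus hrminus]
      have hpre2 : (∏ k, (if μ k = Complex.I then
            Complex.exp (((-((-1:ℝ)^((n-1)/2)) * (Real.pi/4) : ℝ) : ℂ) * Complex.I) else 1) ^ m k)
          = Complex.exp (((-((-1:ℝ)^((n-1)/2)) * (Real.pi/4) : ℝ) : ℂ) * Complex.I) ^ mplus := by
        rw [ite_pow_prod, hmplus]
      have hpre3 : (∏ k, (if μ k = -Complex.I then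
            Complex.exp ((((-1:ℝ)^((n-1)/2) * (Real.pi/4) : ℝ) : ℂ) * Complex.I) else 1) ^ m k)
          = Complex.exp ((((-1:ℝ)^((n-1)/2) * (Real.pi/4) : ℝ) : ℂ) * Complex.I) ^ mminus := by
        rw [ite_pow_prod, hmminus]
      rw [hpre1, hpre2, hpre3]
      -- now compute the target exponential
      have hsplit : (((((lam + 2 * (P : ℤ) + (rminus : ℤ) - (rplus : ℤ)) * (n : ℤ) : ℤ) : ℝ)
            + (-1 : ℝ) ^ ((n - 1) / 2) * ((mminus : ℝ) - (mplus : ℝ)) / 2)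
          * (Real.pi / 2) * Complex.I : ℂ)
          = (((lam + 2 * (P : ℤ) + (rminus : ℤ) - (rplus : ℤ)) * (n : ℤ) : ℤ) : ℂ)
              * (((Real.pi/2 : ℝ) : ℂ) * Complex.I)
            + ((mplus : ℂ) * ((((-((-1:ℝ)^((n-1)/2)) * (Real.pi/4) : ℝ)) : ℂ) * Complex.I)
            + (mminus : ℂ) * (((((-1:ℝ)^((n-1)/2) * (Real.pi/4) : ℝ)) : ℂ) * Complex.I)) := by
        push_cast
        ring
      rw [hsplit, Complex.exp_add, Complex.exp_add, Complex.exp_int_mul,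
        _root_.exp_pi_div_two_mul_I, Complex.exp_nat_mul, Complex.exp_nat_mul]
      rw [show (lam + 2 * (P : ℤ) + (rminus : ℤ) - (rplus : ℤ))
          = lam + (2 * (P : ℤ) + (rminus : ℤ) - (rplus : ℤ)) by ring]
      rw [zpow_mul, zpow_natCast, zpow_add₀ Complex.I_ne_zero, mul_pow]
      ring
    have hangle_eq : (((((lam + 2 * (P : ℤ) + (rminus : ℤ) - (rplus : ℤ)) * (n : ℤ) : ℤ) : ℝ)
          + (-1 : ℝ) ^ ((n - 1) / 2) * ((mminus : ℝ) - (mplus : ℝ)) / 2)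
        * (Real.pi / 2) * Complex.I : ℂ)
        = ((((((lam + 2 * (P : ℤ) + (rminus : ℤ) - (rplus : ℤ)) * (n : ℤ) : ℤ) : ℝ)
          + (-1 : ℝ) ^ ((n - 1) / 2) * ((mminus : ℝ) - (mplus : ℝ)) / 2)
        * (Real.pi / 2) : ℝ) : ℂ) * Complex.I := by
      push_cast
      ring
    have habs1 : ‖Complex.exp
        (((((lam + 2 * (P : ℤ) + (rminus : ℤ) - (rplus : ℤ)) * (n : ℤ) : ℤ) : ℝ)
            + (-1 : ℝ) ^ ((n - 1) / 2) * ((mminus : ℝ) - (mplus : ℝ)) / 2)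
          * (Real.pi / 2) * Complex.I)‖ = 1 := by
      rw [hangle_eq]
      exact Complex.norm_exp_ofReal_mul_I _
    rw [hexp, ← mul_sub_one, norm_mul, habs1, one_mul]
  -- conclude
  have hG : Filter.Tendsto (fun n : ℕ => ‖D n - 1‖) Filter.atTop (nhds 0) := by
    have h1 : Filter.Tendsto (fun n : ℕ => D n - 1) Filter.atTop (nhds 0) := by
      have := hDt.sub (tendsto_const_nhds (x := (1:ℂ)))
      simpa using this
    have := (continuous_norm.tendsto 0).comp h1
    simpa [Function.comp_def] using this
  refine Filter.Tendsto.congr' ?_ (hG.mono_left inf_le_left)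
  rw [Filter.EventuallyEq, Filter.eventually_inf_principal]
  exact Filter.Eventually.of_forall (fun n hn => (key n hn).symm)
end

section
/- For the weighted hexagonal lattice fundamental domain with bipartite characteristic polynomial Q(z,w) = ν₁² + ν₃² + ν₁ν₃(w + w^{−1}) + ν₂²z (ν₁, ν₂, ν₃ > 0): Q has no zeros on the unit torus S¹ × S¹ if and only if ν₁ + ν₃ < ν₂ or ν₂ < |ν₁ − ν₃|; and if |ν₁ − ν₃| < ν₂ < ν₁ + ν₃, then the zeros of Q on the unit torus are exactly the two points (−1, w₀) and (−1, conj(w₀)) where w₀ ∈ S¹ satisfies ν₁² + ν₃² + ν₁ν₃(w₀ + w₀^{−1}) = ν₂². -/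
private lemma hex_sum_re {w : ℂ} (hw : ‖w‖ = 1) :
    w + w⁻¹ = ((2 * w.re : ℝ) : ℂ) := by
  rw [Complex.inv_eq_conj hw, Complex.add_conj]

private lemma hex_mk_abs {r : ℝ} (hr : |r| ≤ 1) :
    ‖(⟨r, Real.sqrt (1 - r ^ 2)⟩ : ℂ)‖ = 1 := by
  have h1 : 0 ≤ 1 - r ^ 2 := by nlinarith [abs_nonneg r, _root_.sq_abs r]
  rw [Complex.norm_def, Complex.normSq_mk]
  rw [show r * r + Real.sqrt (1 - r ^ 2) * Real.sqrt (1 - r ^ 2) = 1 by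
    rw [Real.mul_self_sqrt h1]; ring]
  exact Real.sqrt_one

private lemma hex_key (ν₁ ν₂ ν₃ : ℝ) (h₂ : 0 < ν₂) (hm : 0 < ν₁ * ν₃)
    (z w : ℂ) (hz : ‖z‖ = 1) (hw : ‖w‖ = 1) :
    ((ν₁ : ℂ) ^ 2 + (ν₃ : ℂ) ^ 2 + (ν₁ : ℂ) * ν₃ * (w + w⁻¹) + (ν₂ : ℂ) ^ 2 * z = 0)
    ↔ (z = -1 ∧ ν₁ ^ 2 + ν₃ ^ 2 + 2 * (ν₁ * ν₃) * w.re = ν₂ ^ 2) := by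
  have hre : |w.re| ≤ 1 := by
    have := Complex.abs_re_le_norm w; rwa [hw] at this
  set A : ℝ := ν₁ ^ 2 + ν₃ ^ 2 + 2 * (ν₁ * ν₃) * w.re with hA
  have hrw : (ν₁ : ℂ) ^ 2 + (ν₃ : ℂ) ^ 2 + (ν₁ : ℂ) * ν₃ * (w + w⁻¹) + (ν₂ : ℂ) ^ 2 * z
      = (A : ℂ) + (ν₂ : ℂ) ^ 2 * z := by
    rw [hex_sum_re hw]; push_cast [hA]; ring
  rw [hrw]
  have hν2 : ((ν₂ : ℂ)) ^ 2 ≠ 0 := by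
    simp [pow_ne_zero_iff, Complex.ofReal_ne_zero, h₂.ne']
  constructor
  · intro h
    have hzeq : z = -(A : ℂ) / (ν₂ : ℂ) ^ 2 := by
      rw [eq_div_iff hν2]
      linear_combination h
    have habs : |A| / ν₂ ^ 2 = 1 := by
      have hd : ‖((ν₂ : ℂ) ^ 2)‖ = ν₂ ^ 2 := by
        rw [norm_pow, Complex.norm_real, Real.norm_of_nonneg h₂.le]
      have := congrArg (‖·‖) hzeq
      rw [hz, norm_div, norm_neg, Complex.norm_real, Real.norm_eq_abs, hd] at this
      exact this.symm
    have hApos : 0 ≤ A := by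
      have h1 : -1 ≤ w.re := (abs_le.1 hre).1
      have h2 : (ν₁ - ν₃) ^ 2 ≤ A := by rw [hA]; nlinarith
      nlinarith [sq_nonneg (ν₁ - ν₃)]
    have hAeq : A = ν₂ ^ 2 := by
      have : |A| = ν₂ ^ 2 := by
        field_simp at habs; linarith [habs]
      rwa [_root_.abs_of_nonneg hApos] at this
    refine ⟨?_, hAeq⟩
    rw [hzeq, hAeq]
    push_cast
    rw [neg_div, div_self hν2]
  · rintro ⟨hz1, hAeq⟩
    rw [hz1, hAeq]
    push_cast
    ring



/-- For the hexagonal-lattice bipartite characteristic polynomial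
`Q(z,w) = ν₁² + ν₃² + ν₁ν₃(w + w⁻¹) + ν₂²z` with `ν₁, ν₂, ν₃ > 0`:
`Q` has no zeros on the unit torus iff `ν₁ + ν₃ < ν₂` or `ν₂ < |ν₁ − ν₃|`; and if
`|ν₁ − ν₃| < ν₂ < ν₁ + ν₃`, then the zeros of `Q` on the unit torus are exactly the two
points `(−1, w₀)` and `(−1, conj w₀)` where `w₀ ∈ S¹` satisfies
`ν₁² + ν₃² + ν₁ν₃(w₀ + w₀⁻¹) = ν₂²`. -/
theorem hexagonal_spectral_curve_zeros (ν₁ ν₂ ν₃ : ℝ)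
    (h₁ : 0 < ν₁) (h₂ : 0 < ν₂) (h₃ : 0 < ν₃) :
    ((∀ z w : ℂ, ‖z‖ = 1 → ‖w‖ = 1 →
        (ν₁ : ℂ) ^ 2 + (ν₃ : ℂ) ^ 2 + (ν₁ : ℂ) * ν₃ * (w + w⁻¹) + (ν₂ : ℂ) ^ 2 * z ≠ 0)
      ↔ (ν₁ + ν₃ < ν₂ ∨ ν₂ < |ν₁ - ν₃|))
    ∧ (|ν₁ - ν₃| < ν₂ → ν₂ < ν₁ + ν₃ →
        ∃ w₀ : ℂ, ‖w₀‖ = 1 ∧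
          (ν₁ : ℂ) ^ 2 + (ν₃ : ℂ) ^ 2 + (ν₁ : ℂ) * ν₃ * (w₀ + w₀⁻¹) = (ν₂ : ℂ) ^ 2 ∧
          ∀ z w : ℂ, ‖z‖ = 1 → ‖w‖ = 1 →
            ((ν₁ : ℂ) ^ 2 + (ν₃ : ℂ) ^ 2 + (ν₁ : ℂ) * ν₃ * (w + w⁻¹) + (ν₂ : ℂ) ^ 2 * z = 0
              ↔ (z = -1 ∧ (w = w₀ ∨ w = (starRingEnd ℂ) w₀)))) := by
  have hm : 0 < ν₁ * ν₃ := mul_pos h₁ h₃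
  constructor
  · constructor
    · -- no zeros → inequality
      intro h
      by_contra hc
      push_neg at hc
      obtain ⟨hle1, hle2⟩ := hc
      -- |ν₁-ν₃| ≤ ν₂ ≤ ν₁+ν₃
      set r : ℝ := (ν₂ ^ 2 - ν₁ ^ 2 - ν₃ ^ 2) / (2 * (ν₁ * ν₃)) with hr
      have hrabs : |r| ≤ 1 := by
        rw [abs_le]
        constructor
        · rw [le_div_iff₀ (by positivity)]
          nlinarith [_root_.sq_abs (ν₁ - ν₃), abs_nonneg (ν₁ - ν₃), sq_nonneg (|ν₁ - ν₃| - ν₂)]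
        · rw [div_le_iff₀ (by positivity)]
          nlinarith
      set w : ℂ := ⟨r, Real.sqrt (1 - r ^ 2)⟩ with hwdef
      have hw : ‖w‖ = 1 := hex_mk_abs hrabs
      have hA : ν₁ ^ 2 + ν₃ ^ 2 + 2 * (ν₁ * ν₃) * w.re = ν₂ ^ 2 := by
        show ν₁ ^ 2 + ν₃ ^ 2 + 2 * (ν₁ * ν₃) * r = ν₂ ^ 2
        rw [hr]; field_simp <;> ring
      exact h (-1) w (by simp) hw
        ((hex_key ν₁ ν₂ ν₃ h₂ hm (-1) w (by simp) hw).2 ⟨rfl, hA⟩)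
    · -- inequality → no zeros
      intro hc z w hz hw h
      obtain ⟨-, hA⟩ := (hex_key ν₁ ν₂ ν₃ h₂ hm z w hz hw).1 h
      have hre : |w.re| ≤ 1 := by
        have := Complex.abs_re_le_norm w; rwa [hw] at this
      rcases hc with hgt | hlt
      · nlinarith [neg_abs_le w.re, abs_le.1 hre]
      · nlinarith [abs_le.1 hre, _root_.sq_abs (ν₁ - ν₃), abs_nonneg (ν₁ - ν₃)]
  · intro hlt1 hlt2
    set r : ℝ := (ν₂ ^ 2 - ν₁ ^ 2 - ν₃ ^ 2) / (2 * (ν₁ * ν₃)) with hr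
    have hrabs : |r| ≤ 1 := by
      rw [abs_le]
      constructor
      · rw [le_div_iff₀ (by positivity)]
        nlinarith [_root_.sq_abs (ν₁ - ν₃), abs_nonneg (ν₁ - ν₃)]
      · rw [div_le_iff₀ (by positivity)]
        nlinarith
    refine ⟨⟨r, Real.sqrt (1 - r ^ 2)⟩, hex_mk_abs hrabs, ?_, ?_⟩
    · set w₀ : ℂ := ⟨r, Real.sqrt (1 - r ^ 2)⟩ with hw0
      have hw : ‖w₀‖ = 1 := hex_mk_abs hrabs
      rw [hex_sum_re hw]
      have : w₀.re = r := rfl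
      rw [this]
      push_cast
      have : (2 : ℂ) * r * (ν₁ * ν₃) = ν₂ ^ 2 - ν₁ ^ 2 - ν₃ ^ 2 := by
        have hR : 2 * r * (ν₁ * ν₃) = ν₂ ^ 2 - ν₁ ^ 2 - ν₃ ^ 2 := by
          rw [hr]; field_simp <;> ring
        exact_mod_cast congrArg (fun x : ℝ => (x : ℂ)) hR
      linear_combination this
    · intro z w hz hw
      set w₀ : ℂ := ⟨r, Real.sqrt (1 - r ^ 2)⟩ with hw0
      have hw0abs : ‖w₀‖ = 1 := hex_mk_abs hrabs
      rw [hex_key ν₁ ν₂ ν₃ h₂ hm z w hz hw]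
      have hAiff : ν₁ ^ 2 + ν₃ ^ 2 + 2 * (ν₁ * ν₃) * w.re = ν₂ ^ 2
          ↔ (w = w₀ ∨ w = (starRingEnd ℂ) w₀) := by
        constructor
        · intro hA
          have hwre : w.re = r := by
            rw [hr, eq_div_iff (by positivity)]
            linarith [hA]
          have hns : Complex.normSq w = 1 := by
            have := congrArg (fun x => x ^ 2) hw
            simpa [Complex.sq_norm] using this
          have hns0 : Complex.normSq w₀ = 1 := by
            have := congrArg (fun x => x ^ 2) hw0abs
            simpa [Complex.sq_norm] using this
          have h1 : w.re * w.re + w.im * w.im = 1 := hns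
          have h2 : w₀.re * w₀.re + w₀.im * w₀.im = 1 := hns0
          have hre0 : w₀.re = r := rfl
          have him : w.im = w₀.im ∨ w.im = -w₀.im := by
            rw [hwre] at h1
            rw [hre0] at h2
            have : w.im * w.im = w₀.im * w₀.im := by linarith
            exact mul_self_eq_mul_self_iff.1 this
          rcases him with h | h
          · left; exact Complex.ext (by rw [hwre, hre0]) h
          · right
            apply Complex.ext
            · simp [Complex.conj_re, hwre, hre0]
            · simp [Complex.conj_im, h]
        · rintro (h | h) <;> subst h
          · show ν₁ ^ 2 + ν₃ ^ 2 + 2 * (ν₁ * ν₃) * r = ν₂ ^ 2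
            rw [hr]; field_simp <;> ring
          · show ν₁ ^ 2 + ν₃ ^ 2 + 2 * (ν₁ * ν₃) * w₀.re = ν₂ ^ 2
            show ν₁ ^ 2 + ν₃ ^ 2 + 2 * (ν₁ * ν₃) * r = ν₂ ^ 2
            rw [hr]; field_simp <;> ring
      rw [hAiff]
end
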